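/- arXiv:2505.07277 — 12 statements merged into one kernel-verified Lean document; each statement's English description precedes it below -/
import Mathlib

section
/- Let f : ℕ → ℂ be a nonzero multiplicative function. Then f is Toeplitz if and only if there exist a modulus m ≥ 1, a Dirichlet character χ of modulus m, and a finite set F of prime numbers such that f(n) = χ(n) for every n ≥ 1 that is divisible by no prime of F. -/
open scoped BigOperators Classical

noncomputable section

/-- `f : ℕ → ℂ` is multiplicative: `f 1 = 1` and `f (a*b) = f a * f b` for coprime `a, b`. -/
def IsMult (f : ℕ → ℂ) : Prop :=
  f 1 = 1 ∧ ∀ a b : ℕ, Nat.Coprime a b → f (a * b) = f a * f b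

/-- `Per_m(f)`: the set of positions `n ≥ 1` such that `f` is constant on
`{n' ≥ 1 : n' ≡ n (mod m)}`. -/
def PerSet (f : ℕ → ℂ) (m : ℕ) : Set ℕ :=
  {n : ℕ | 1 ≤ n ∧ ∀ n' : ℕ, 1 ≤ n' → n' % m = n % m → f n' = f n}

/-- `f` is Toeplitz: every position `n ≥ 1` has a period. -/
def IsToeplitz (f : ℕ → ℂ) : Prop :=
  ∀ n : ℕ, 1 ≤ n → ∃ m : ℕ, 1 ≤ m ∧ n ∈ PerSet f m

/-- `χ : ℕ → ℂ` is (the function on `ℕ` induced by) a Dirichlet character of modulus `m`. -/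
def IsDirichletCharFn (m : ℕ) (χ : ℕ → ℂ) : Prop :=
  ∃ χ₀ : DirichletCharacter ℂ m, ∀ n : ℕ, χ n = χ₀ (n : ZMod m)

/-- `χ : ℕ → ℂ` is induced by a primitive Dirichlet character of modulus `m`. -/
def IsPrimitiveDirichletCharFn (m : ℕ) (χ : ℕ → ℂ) : Prop :=
  ∃ χ₀ : DirichletCharacter ℂ m, χ₀.IsPrimitive ∧ ∀ n : ℕ, χ n = χ₀ (n : ZMod m)

/-- `𝔻(f,g) < ∞`: convergence of the Granville–Soundararajan distance series. -/
def PretConv (f g : ℕ → ℂ) : Prop :=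
  Summable (fun p : Nat.Primes =>
    (1 : ℝ) / ((p : ℕ) : ℝ) * (1 - (f (p : ℕ) * (starRingEnd ℂ) (g (p : ℕ))).re))

/-- `f` is Besicovitch rationally almost periodic. -/
def IsRAP (f : ℕ → ℂ) : Prop :=
  ∀ ε : ℝ, 0 < ε → ∃ (g : ℕ → ℂ) (m : ℕ), 1 ≤ m ∧ (∀ n : ℕ, g (n + m) = g n) ∧
    Filter.limsup
      (fun N : ℕ => (1 : ℝ) / N * ∑ n ∈ Finset.Icc 1 N, ‖f n - g n‖)
      Filter.atTop < ε

lemma gcd_congr_aux {m a b : ℕ} (h : a ≡ b [MOD m]) : Nat.gcd a m = Nat.gcd b m := by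
  rw [Nat.gcd_comm a m, Nat.gcd_comm b m, Nat.gcd_rec m a, Nat.gcd_rec m b, h]

lemma aux_key {f : ℕ → ℂ} {m : ℕ} (hf : IsMult f) (hm : 1 ≤ m)
    (hone : ∀ k : ℕ, 1 ≤ k → k ≡ 1 [MOD m] → f k = 1) :
    ∀ a b : ℕ, 1 ≤ a → 1 ≤ b → Nat.Coprime a m → a ≡ b [MOD m] → f a = f b ∧ f a ≠ 0 := by
  intro a b ha hb hcop hab
  have hcopb : Nat.Coprime b m := by
    have := gcd_congr_aux hab
    unfold Nat.Coprime at *; omega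
  have hab' : Nat.Coprime (a * b) m := Nat.Coprime.mul hcop hcopb
  set φ := Nat.totient m with hφdef
  have hφ : 1 ≤ φ := Nat.totient_pos.mpr hm
  obtain ⟨c0, hc01, hc0m⟩ := Nat.chineseRemainder hab' 1 (a ^ (φ - 1))
  set c := c0 + (a * b) * m with hcdef
  have hc1 : c ≡ 1 [MOD a * b] := by
    show c % (a * b) = 1 % (a * b)
    rw [hcdef, Nat.add_mul_mod_self_left]; exact hc01
  have hcm : c ≡ a ^ (φ - 1) [MOD m] := by
    show c % m = _ % m
    rw [hcdef, Nat.add_mul_mod_self_right]; exact hc0m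
  have hcge : 1 ≤ c := by
    have : 1 ≤ a * b * m := Nat.mul_pos (Nat.mul_pos ha hb) hm
    omega
  have hca : Nat.Coprime a c := by
    have h1 : c ≡ 1 [MOD a] := (hc1).of_dvd (dvd_mul_right a b)
    have := gcd_congr_aux (m := a) h1
    unfold Nat.Coprime
    rw [Nat.gcd_comm, this, Nat.gcd_one_left]
  have hcb : Nat.Coprime b c := by
    have h1 : c ≡ 1 [MOD b] := (hc1).of_dvd (dvd_mul_left b a)
    have := gcd_congr_aux (m := b) h1
    unfold Nat.Coprime
    rw [Nat.gcd_comm, this, Nat.gcd_one_left]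
  have hac1 : a * c ≡ 1 [MOD m] := by
    have h1 : a * c ≡ a * a ^ (φ - 1) [MOD m] := hcm.mul_left a
    have h2 : a * a ^ (φ - 1) = a ^ φ := by
      rw [← pow_succ']
      congr 1
      omega
    rw [h2] at h1
    exact h1.trans (Nat.ModEq.pow_totient hcop)
  have hbc1 : b * c ≡ 1 [MOD m] := ((hab.mul_right c).symm.trans hac1)
  have hfac : f a * f c = 1 := by
    rw [← hf.2 a c hca]
    exact hone (a * c) (Nat.mul_pos ha hcge) hac1
  have hfbc : f b * f c = 1 := by
    rw [← hf.2 b c hcb]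
    exact hone (b * c) (Nat.mul_pos hb hcge) hbc1
  have hfc : f c ≠ 0 := by
    intro h; rw [h, mul_zero] at hfac; exact one_ne_zero hfac.symm
  exact ⟨mul_right_cancel₀ hfc (hfac.trans hfbc.symm),
    left_ne_zero_of_mul_eq_one hfac⟩

lemma aux_mult {f : ℕ → ℂ} {m : ℕ} (hf : IsMult f) (hm : 1 ≤ m)
    (hone : ∀ k : ℕ, 1 ≤ k → k ≡ 1 [MOD m] → f k = 1) :
    ∀ a b N : ℕ, 1 ≤ a → 1 ≤ b → 1 ≤ N → Nat.Coprime a m → Nat.Coprime b m →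
      N ≡ a * b [MOD m] → f N = f a * f b := by
  intro a b N ha hb hN hcopa hcopb hNab
  obtain ⟨c0, hc0a, hc0m⟩ := Nat.chineseRemainder hcopa 1 b
  set b' := c0 + a * m with hb'def
  have hb'a : b' ≡ 1 [MOD a] := by
    show b' % a = 1 % a
    rw [hb'def, Nat.add_mul_mod_self_left]; exact hc0a
  have hb'm : b' ≡ b [MOD m] := by
    show b' % m = b % m
    rw [hb'def, Nat.add_mul_mod_self_right]; exact hc0m
  have hb'ge : 1 ≤ b' := by
    have : 1 ≤ a * m := Nat.mul_pos ha hm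
    omega
  have hab' : Nat.Coprime a b' := by
    have := gcd_congr_aux (m := a) hb'a
    unfold Nat.Coprime
    rw [Nat.gcd_comm, this, Nat.gcd_one_left]
  have hb'cop : Nat.Coprime b' m := by
    have := gcd_congr_aux hb'm
    unfold Nat.Coprime at *; omega
  have h1 : N ≡ a * b' [MOD m] := hNab.trans (hb'm.mul_left a).symm
  have h2 : f (a * b') = f N :=
    (aux_key hf hm hone (a * b') N (Nat.mul_pos ha hb'ge) hN (hcopa.mul hb'cop) h1.symm).1
  have h3 : f b' = f b := (aux_key hf hm hone b' b hb'ge hb hb'cop hb'm).1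
  rw [← h2, hf.2 a b' hab', h3]

theorem toeplitz_iff_eq_dirichlet_char_off_finite_primes
    (f : ℕ → ℂ) (hf : IsMult f) (hnz : ∃ n : ℕ, f n ≠ 0) :
    IsToeplitz f ↔
      ∃ (m : ℕ) (χ : ℕ → ℂ) (F : Finset ℕ),
        1 ≤ m ∧ IsDirichletCharFn m χ ∧ (∀ p ∈ F, Nat.Prime p) ∧
        ∀ n : ℕ, 1 ≤ n → (∀ p ∈ F, ¬ p ∣ n) → f n = χ n := by
  constructor
  · intro htoe
    obtain ⟨m, hm1, -, hper⟩ := htoe 1 le_rfl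
    have hone : ∀ k : ℕ, 1 ≤ k → k ≡ 1 [MOD m] → f k = 1 := fun k hk hkm =>
      (hper k hk hkm).trans hf.1
    haveI : NeZero m := ⟨by omega⟩
    set rep : (ZMod m)ˣ → ℕ := fun u => (u : ZMod m).val + m with hrepdef
    have hrep1 : ∀ u, 1 ≤ rep u := fun u => by simp only [hrepdef]; omega
    have hrepcop : ∀ u, Nat.Coprime (rep u) m := fun u =>
      Nat.coprime_add_self_left.mpr (ZMod.val_coe_unit_coprime u)
    have hrepcast : ∀ u : (ZMod m)ˣ, ((rep u : ℕ) : ZMod m) = (u : ZMod m) := fun u => by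
      simp only [hrepdef]
      push_cast
      rw [ZMod.natCast_val, ZMod.cast_id, ZMod.natCast_self, add_zero]
    have hne : ∀ u, f (rep u) ≠ 0 := fun u =>
      (aux_key hf hm1 hone (rep u) (rep u) (hrep1 u) (hrep1 u) (hrepcop u) rfl).2
    set ψ : (ZMod m)ˣ →* ℂˣ := MonoidHom.mk' (fun u => Units.mk0 (f (rep u)) (hne u)) (by
      intro u v
      ext
      show f (rep (u * v)) = f (rep u) * f (rep v)
      apply aux_mult hf hm1 hone _ _ _ (hrep1 u) (hrep1 v) (hrep1 (u * v)) (hrepcop u)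
        (hrepcop v)
      refine (ZMod.natCast_eq_natCast_iff _ _ _).mp ?_
      rw [Nat.cast_mul, hrepcast, hrepcast, hrepcast, Units.val_mul]) with hψdef
    set χ₀ : DirichletCharacter ℂ m := MulChar.ofUnitHom ψ with hχ₀def
    have hχval : ∀ n : ℕ, 1 ≤ n → Nat.Coprime n m → χ₀ ((n : ℕ) : ZMod m) = f n := by
      intro n hn hcopn
      have hu : ((ZMod.unitOfCoprime n hcopn : (ZMod m)ˣ) : ZMod m) = (n : ZMod m) :=
        ZMod.coe_unitOfCoprime n hcopn
      rw [hχ₀def, ← hu, MulChar.ofUnitHom_coe]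
      show f (rep (ZMod.unitOfCoprime n hcopn)) = f n
      exact (aux_key hf hm1 hone _ n (hrep1 _) hn (hrepcop _)
        ((ZMod.natCast_eq_natCast_iff _ _ _).mp (by rw [hrepcast, hu]))).1
    refine ⟨m, fun n => χ₀ (n : ZMod m), m.primeFactors, hm1, ⟨χ₀, fun n => rfl⟩,
      fun p hp => Nat.prime_of_mem_primeFactors hp, ?_⟩
    intro n hn hnp
    have hcopn : Nat.Coprime n m := by
      by_contra hc
      obtain ⟨p, pp, pn, pm⟩ := Nat.Prime.not_coprime_iff_dvd.mp hc
      exact hnp p (Nat.mem_primeFactors.mpr ⟨pp, pm, by omega⟩) pn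
    exact (hχval n hn hcopn).symm
  · rintro ⟨m, χ, F, hm1, ⟨χ₀, hχ⟩, hFp, hagree⟩
    intro n hn
    have hn0 : n ≠ 0 := by omega
    set a : ℕ := ∏ p ∈ F, p ^ (n.factorization p) with hadef
    set P : ℕ := ∏ p ∈ F, p with hPdef
    set M : ℕ := m * n * P with hMdef
    have hPpos : 0 < P := Finset.prod_pos (fun p hp => (hFp p hp).pos)
    have hM1 : 1 ≤ M := Nat.mul_pos (Nat.mul_pos hm1 hn) hPpos
    have hpairwise : (↑F : Set ℕ).Pairwise
        (Function.onFun IsRelPrime fun p => p ^ (n.factorization p)) := by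
      intro p hp q hq hpq
      exact Nat.coprime_iff_isRelPrime.mp
        (Nat.Coprime.pow _ _ ((Nat.coprime_primes (hFp p hp) (hFp q hq)).mpr hpq))
    have hadvd : a ∣ n :=
      Finset.prod_dvd_of_isRelPrime hpairwise (fun p _ => Nat.ordProj_dvd n p)
    have ha0 : a ≠ 0 := fun h => hn0 (Nat.eq_zero_of_zero_dvd (h ▸ hadvd))
    have key : ∀ k : ℕ, a ∣ k → k ≠ 0 → (∀ p ∈ F, ¬ p ^ (n.factorization p + 1) ∣ k) →
        (1 ≤ k / a) ∧ (∀ p ∈ F, ¬ p ∣ k / a) ∧ Nat.Coprime a (k / a) := by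
      intro k hak hk0 hknot
      have hk : k = a * (k / a) := (Nat.mul_div_cancel' hak).symm
      have h1 : 1 ≤ k / a :=
        Nat.pos_of_ne_zero (fun h => hk0 (by rw [hk, h, mul_zero]))
      have h2 : ∀ p ∈ F, ¬ p ∣ k / a := by
        intro p hp hpd
        apply hknot p hp
        have h3 : p ^ (n.factorization p) ∣ a := Finset.dvd_prod_of_mem _ hp
        calc p ^ (n.factorization p + 1) = p ^ (n.factorization p) * p := pow_succ p _
        _ ∣ a * (k / a) := mul_dvd_mul h3 hpd
        _ = k := hk.symm
      refine ⟨h1, h2, ?_⟩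
      by_contra hc
      obtain ⟨q, qp, qa, qk⟩ := Nat.Prime.not_coprime_iff_dvd.mp hc
      obtain ⟨p, hp, hqp⟩ := (Prime.dvd_finset_prod_iff qp.prime _).mp qa
      have hqeq : q = p :=
        (Nat.prime_dvd_prime_iff_eq qp (hFp p hp)).mp (qp.prime.dvd_of_dvd_pow hqp)
      exact h2 p hp (hqeq ▸ qk)
    have hnsucc : ∀ p ∈ F, ¬ p ^ (n.factorization p + 1) ∣ n := fun p hp =>
      Nat.pow_succ_factorization_not_dvd hn0 (hFp p hp)
    obtain ⟨hb1, hbF, habc⟩ := key n hadvd hn0 hnsucc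
    refine ⟨M, hM1, hn, ?_⟩
    intro n' hn'1 hmod
    have hmod' : n' ≡ n [MOD M] := hmod
    have hn'0 : n' ≠ 0 := by omega
    have hnM : n ∣ M := ⟨m * P, by rw [hMdef]; ring⟩
    have dvd_iff : ∀ d : ℕ, d ∣ M → (d ∣ n' ↔ d ∣ n) := by
      intro d hdM
      have h := hmod'.of_dvd hdM
      constructor
      · intro h'
        exact Nat.modEq_zero_iff_dvd.mp (h.symm.trans (Nat.modEq_zero_iff_dvd.mpr h'))
      · intro h'
        exact Nat.modEq_zero_iff_dvd.mp (h.trans (Nat.modEq_zero_iff_dvd.mpr h'))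
    have han' : a ∣ n' := (dvd_iff a (hadvd.trans hnM)).mpr hadvd
    have hn'succ : ∀ p ∈ F, ¬ p ^ (n.factorization p + 1) ∣ n' := by
      intro p hp hc
      have hpM : p ^ (n.factorization p + 1) ∣ M := by
        have h1 : p ^ (n.factorization p) ∣ n := Nat.ordProj_dvd n p
        have h2 : p ∣ P := Finset.dvd_prod_of_mem _ hp
        have h3 : p ^ (n.factorization p + 1) ∣ n * P := by
          rw [pow_succ]; exact mul_dvd_mul h1 h2
        exact h3.trans ⟨m, by rw [hMdef]; ring⟩
      exact hnsucc p hp ((dvd_iff _ hpM).mp hc)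
    obtain ⟨hb'1, hb'F, hab'⟩ := key n' han' hn'0 hn'succ
    have hamM : a * m ∣ M := by
      obtain ⟨t, ht⟩ := hadvd
      exact ⟨t * P, by rw [hMdef, ht]; ring⟩
    have hcancel : n' / a ≡ n / a [MOD m] := by
      apply Nat.ModEq.mul_left_cancel' (c := a) ha0
      have h := hmod'.of_dvd hamM
      rwa [Nat.mul_div_cancel' han', Nat.mul_div_cancel' hadvd]
    have hfn : f n = f a * f (n / a) := by
      rw [← hf.2 a _ habc, Nat.mul_div_cancel' hadvd]
    have hfn' : f n' = f a * f (n' / a) := by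
      rw [← hf.2 a _ hab', Nat.mul_div_cancel' han']
    have hb : f (n / a) = χ₀ ((n / a : ℕ) : ZMod m) := by rw [hagree _ hb1 hbF, hχ]
    have hb' : f (n' / a) = χ₀ ((n' / a : ℕ) : ZMod m) := by rw [hagree _ hb'1 hb'F, hχ]
    have hcast : ((n' / a : ℕ) : ZMod m) = ((n / a : ℕ) : ZMod m) :=
      (ZMod.natCast_eq_natCast_iff _ _ _).mpr hcancel
    rw [hfn', hfn, hb, hb', hcast]
end
end

section
/- Let f : ℕ → ℂ be a nonzero multiplicative Toeplitz function. Then for every ε > 0 there exists T ≥ 1 such that the upper natural density of the set {n ≥ 1 : n ∉ Per_T(f)} is smaller than ε, i.e. limsup_{N→∞} (1/N)·|{n ≤ N : n ∉ Per_T(f)}| < ε. (In particular every multiplicative Toeplitz sequence is a regular Toeplitz sequence.) -/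
open scoped BigOperators Classical

noncomputable section

/-- If `f` is multiplicative and `f ≡ 1` on `{n' ≥ 1 : n' ≡ 1 [MOD m]}`, then `f` is
`m`-periodic on integers coprime to `m`. -/
lemma aux_coprime_per (f : ℕ → ℂ)
    (hf : f 1 = 1 ∧ ∀ a b : ℕ, Nat.Coprime a b → f (a * b) = f a * f b)
    (m : ℕ) (hm1 : 1 ≤ m)
    (hm : ∀ n' : ℕ, 1 ≤ n' → n' % m = 1 % m → f n' = 1)
    {n n' : ℕ} (hn : 1 ≤ n) (hn' : 1 ≤ n')
    (hc : Nat.Coprime n m) (hc' : Nat.Coprime n' m)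
    (hmod : n' % m = n % m) : f n' = f n := by
  obtain ⟨a, ha⟩ : ∃ a, n * a % m = 1 % m := by
    rcases eq_or_lt_of_le hm1 with h1 | h1
    · exact ⟨1, by rw [← h1]; omega⟩
    · obtain ⟨a, -, ha⟩ := Nat.exists_mul_mod_eq_one_of_coprime hc h1
      exact ⟨a, by rw [ha, Nat.mod_eq_of_lt h1]⟩
  set N := n * n' with hN
  have hN0 : 0 < N := Nat.mul_pos hn hn'
  have hcmN : Nat.Coprime m N := Nat.Coprime.mul_right hc.symm hc'.symm
  obtain ⟨k₀, hk₀m, hk₀N⟩ := Nat.chineseRemainder hcmN a 1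
  set k := k₀ + m * N with hk
  have hk1 : 1 ≤ k := by have := Nat.mul_pos (by omega : 0 < m) hN0; omega
  have hkm : k % m = a % m := by
    rw [hk, Nat.add_mul_mod_self_left]; exact hk₀m
  have hkN : k % N = 1 % N := by
    rw [hk, Nat.add_mul_mod_self_right]; exact hk₀N
  have hckN : Nat.Coprime k N := by
    unfold Nat.Coprime
    rw [Nat.gcd_comm, Nat.gcd_rec, hkN, ← Nat.gcd_rec, Nat.gcd_one_right]
  have hcnk : Nat.Coprime n k := ((Nat.Coprime.coprime_dvd_right (dvd_mul_right n n') hckN)).symm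
  have hcn'k : Nat.Coprime n' k := ((Nat.Coprime.coprime_dvd_right (dvd_mul_left n' n) hckN)).symm
  have hnk1 : (n * k) % m = 1 % m := by
    have h1 : n * k ≡ n * a [MOD m] := Nat.ModEq.mul_left n hkm
    exact h1.trans ha
  have h1 : f (n * k) = 1 := hm _ (Nat.mul_pos hn hk1) hnk1
  have h2 : f (n' * k) = 1 := by
    refine hm _ (Nat.mul_pos hn' hk1) ?_
    exact (Nat.ModEq.mul_right k hmod).trans hnk1
  rw [hf.2 n k hcnk] at h1
  rw [hf.2 n' k hcn'k] at h2
  have hfk : f k ≠ 0 := by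
    intro h; rw [h, mul_zero] at h1; exact one_ne_zero h1.symm
  exact mul_right_cancel₀ hfk (h2.trans h1.symm)

/-- If the `m`-part of `n` is small (no `p^E` with `p ∣ m` divides `n`), then `n`
is a periodic position for the period `m ^ E`. -/
lemma aux_perset (f : ℕ → ℂ)
    (hf : f 1 = 1 ∧ ∀ a b : ℕ, Nat.Coprime a b → f (a * b) = f a * f b)
    (m : ℕ) (hm1 : 1 ≤ m)
    (hm : ∀ n' : ℕ, 1 ≤ n' → n' % m = 1 % m → f n' = 1)
    (E : ℕ) (hE : 1 ≤ E) {n : ℕ} (hn : 1 ≤ n)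
    (hsmall : ∀ p ∈ m.primeFactors, ¬ p ^ E ∣ n) :
    1 ≤ n ∧ ∀ n' : ℕ, 1 ≤ n' → n' % (m ^ E) = n % (m ^ E) → f n' = f n := by
  classical
  have hm0 : m ≠ 0 := by omega
  have hn0 : n ≠ 0 := by omega
  set T := m ^ E with hT
  have hT0 : T ≠ 0 := pow_ne_zero _ hm0
  set d : ℕ := ∏ p ∈ m.primeFactors, p ^ n.factorization p with hd
  have hdpos : 0 < d :=
    Finset.prod_pos fun p hp => pow_pos (Nat.prime_of_mem_primeFactors hp).pos _
  have hdfact : ∀ q, d.factorization q =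
      if q ∈ m.primeFactors then n.factorization q else 0 := by
    intro q
    rw [hd, Nat.factorization_prod
      (fun p hp => pow_ne_zero _ (Nat.prime_of_mem_primeFactors hp).pos.ne')]
    rw [Finset.sum_apply']
    rw [Finset.sum_congr rfl (fun p hp => by
      rw [(Nat.prime_of_mem_primeFactors hp).factorization_pow, Finsupp.single_apply])]
    exact Finset.sum_ite_eq' _ _ _
  have hνlt : ∀ q ∈ m.primeFactors, n.factorization q < E := by
    intro q hq
    by_contra h
    exact hsmall q hq (((Nat.prime_of_mem_primeFactors hq).pow_dvd_iff_le_factorization hn0).2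
      (by omega))
  have hddvd : d ∣ n := by
    rw [← Nat.factorization_le_iff_dvd hdpos.ne' hn0, Finsupp.le_def]
    intro q
    rw [hdfact]
    split <;> simp
  have hddvdpow : d ∣ m ^ (E - 1) := by
    rw [← Nat.factorization_le_iff_dvd hdpos.ne' (pow_ne_zero _ hm0), Finsupp.le_def]
    intro q
    rw [hdfact, Nat.factorization_pow, Finsupp.smul_apply, smul_eq_mul]
    split
    · rename_i h
      have h1 : 1 ≤ m.factorization q := by
        have := Nat.Prime.factorization_pos_of_dvd (Nat.prime_of_mem_primeFactors h) hm0
          (Nat.dvd_of_mem_primeFactors h)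
        omega
      have h2 := hνlt q h
      calc n.factorization q ≤ (E - 1) * 1 := by omega
      _ ≤ (E - 1) * m.factorization q := Nat.mul_le_mul_left _ h1
    · exact Nat.zero_le _
  set u : ℕ := n / d with hu
  have hdu : d * u = n := Nat.mul_div_cancel' hddvd
  have hu0 : u ≠ 0 := by
    intro h; rw [h, mul_zero] at hdu; exact hn0 hdu.symm
  have hufact : ∀ q ∈ m.primeFactors, u.factorization q = 0 := by
    intro q hq
    rw [hu, Nat.factorization_div hddvd, Finsupp.tsub_apply, hdfact, if_pos hq]
    omega
  have hcum : Nat.Coprime u m := by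
    rw [← Nat.disjoint_primeFactors hu0 hm0, Finset.disjoint_left]
    intro q hqu hqm
    rw [← Nat.support_factorization, Finsupp.mem_support_iff] at hqu
    exact hqu (hufact q hqm)
  have hdsub : d.primeFactors ⊆ m.primeFactors := by
    intro q hq
    rw [← Nat.support_factorization, Finsupp.mem_support_iff, hdfact] at hq
    by_contra h
    rw [if_neg h] at hq
    exact hq rfl
  have hcdu : Nat.Coprime d u := by
    rw [← Nat.disjoint_primeFactors hdpos.ne' hu0, Finset.disjoint_left]
    intro q hqd hqu
    rw [← Nat.support_factorization, Finsupp.mem_support_iff] at hqu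
    exact hqu (hufact q (hdsub hqd))
  refine ⟨hn, ?_⟩
  intro n' hn'1 hmod
  have hn'0 : n' ≠ 0 := by omega
  have hfq : ∀ q ∈ m.primeFactors, n'.factorization q = n.factorization q := by
    intro q hq
    have hqp := Nat.prime_of_mem_primeFactors hq
    have hmfq : 1 ≤ m.factorization q := by
      have := Nat.Prime.factorization_pos_of_dvd hqp hm0 (Nat.dvd_of_mem_primeFactors hq)
      omega
    set v := n.factorization q with hv
    have hvT : v + 1 ≤ T.factorization q := by
      rw [hT, Nat.factorization_pow, Finsupp.smul_apply, smul_eq_mul]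
      have h2 := hνlt q hq
      calc v + 1 ≤ E * 1 := by omega
      _ ≤ E * m.factorization q := Nat.mul_le_mul_left _ hmfq
    have hdvdT1 : q ^ (v + 1) ∣ T := (hqp.pow_dvd_iff_le_factorization hT0).2 hvT
    have hdvdTv : q ^ v ∣ T := dvd_trans (pow_dvd_pow q (Nat.le_succ v)) hdvdT1
    have hmodv : n' ≡ n [MOD q ^ v] := Nat.ModEq.of_dvd hdvdTv hmod
    have hmodv1 : n' ≡ n [MOD q ^ (v + 1)] := Nat.ModEq.of_dvd hdvdT1 hmod
    have h1 : q ^ v ∣ n' :=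
      Nat.modEq_zero_iff_dvd.1 (hmodv.trans (Nat.modEq_zero_iff_dvd.2
        (Nat.ordProj_dvd n q)))
    have h2 : ¬ q ^ (v + 1) ∣ n' := by
      intro hcon
      have hnd : q ^ (v + 1) ∣ n :=
        Nat.modEq_zero_iff_dvd.1 (hmodv1.symm.trans (Nat.modEq_zero_iff_dvd.2 hcon))
      rw [hqp.pow_dvd_iff_le_factorization hn0] at hnd
      omega
    have hle : v ≤ n'.factorization q := (hqp.pow_dvd_iff_le_factorization hn'0).1 h1
    have hlt : n'.factorization q < v + 1 := by
      by_contra hcon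
      exact h2 ((hqp.pow_dvd_iff_le_factorization hn'0).2 (by omega))
    omega
  have hddvd' : d ∣ n' := by
    rw [← Nat.factorization_le_iff_dvd hdpos.ne' hn'0, Finsupp.le_def]
    intro q
    rw [hdfact]
    split
    · rename_i h; rw [hfq q h]
    · exact Nat.zero_le _
  set u' : ℕ := n' / d with hu'
  have hdu' : d * u' = n' := Nat.mul_div_cancel' hddvd'
  have hu'0 : u' ≠ 0 := by
    intro h; rw [h, mul_zero] at hdu'; exact hn'0 hdu'.symm
  have hu'fact : ∀ q ∈ m.primeFactors, u'.factorization q = 0 := by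
    intro q hq
    rw [hu', Nat.factorization_div hddvd', Finsupp.tsub_apply, hdfact, if_pos hq, hfq q hq]
    omega
  have hcu'm : Nat.Coprime u' m := by
    rw [← Nat.disjoint_primeFactors hu'0 hm0, Finset.disjoint_left]
    intro q hqu hqm
    rw [← Nat.support_factorization, Finsupp.mem_support_iff] at hqu
    exact hqu (hu'fact q hqm)
  have hcdu' : Nat.Coprime d u' := by
    rw [← Nat.disjoint_primeFactors hdpos.ne' hu'0, Finset.disjoint_left]
    intro q hqd hqu
    rw [← Nat.support_factorization, Finsupp.mem_support_iff] at hqu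
    exact hqu (hu'fact q (hdsub hqd))
  have hdmT : d * m ∣ T := by
    have h1 : d * m ∣ m ^ (E - 1) * m := mul_dvd_mul_right hddvdpow m
    rwa [← pow_succ, Nat.sub_add_cancel hE] at h1
  have humod : u' % m = u % m := by
    have hTd : (T : ℤ) ∣ (n : ℤ) - (n' : ℤ) := Nat.modEq_iff_dvd.1 hmod
    have heq : (n : ℤ) - (n' : ℤ) = (d : ℤ) * ((u : ℤ) - (u' : ℤ)) := by
      rw [← hdu, ← hdu']
      push_cast
      ring
    have h2 : ((d : ℤ) * m) ∣ (d : ℤ) * ((u : ℤ) - (u' : ℤ)) := by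
      refine dvd_trans ?_ (heq ▸ hTd)
      exact_mod_cast Int.natCast_dvd_natCast.2 hdmT
    have h3 : (m : ℤ) ∣ (u : ℤ) - (u' : ℤ) := by
      rcases h2 with ⟨c, hc⟩
      refine ⟨c, ?_⟩
      have hd0 : (d : ℤ) ≠ 0 := by exact_mod_cast hdpos.ne'
      have hcc : (d : ℤ) * ((u : ℤ) - (u' : ℤ)) = (d : ℤ) * ((m : ℤ) * c) := by
        rw [hc]; ring
      exact mul_left_cancel₀ hd0 hcc
    exact Nat.modEq_iff_dvd.2 h3
  have hfu : f u' = f u := by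
    refine aux_coprime_per f hf m hm1 hm ?_ ?_ hcum hcu'm humod
    · exact Nat.one_le_iff_ne_zero.2 hu0
    · exact Nat.one_le_iff_ne_zero.2 hu'0
  calc f n' = f (d * u') := by rw [hdu']
  _ = f d * f u' := hf.2 d u' hcdu'
  _ = f d * f u := by rw [hfu]
  _ = f (d * u) := (hf.2 d u hcdu).symm
  _ = f n := by rw [hdu]

lemma aux_card_dvd_Icc (N q : ℕ) :
    ((Finset.Icc 1 N).filter (fun n => q ∣ n)).card = N / q := by
  rw [← Nat.card_multiples' N q]
  congr 1
  ext k
  simp only [Finset.mem_filter, Finset.mem_Icc, Finset.mem_range, Nat.lt_succ_iff]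
  constructor
  · rintro ⟨⟨h1, h2⟩, h3⟩; exact ⟨h2, by omega, h3⟩
  · rintro ⟨h1, h2, h3⟩; exact ⟨⟨by omega, h1⟩, h3⟩

theorem multiplicative_toeplitz_is_regular
    (f : ℕ → ℂ) (hf : IsMult f) (hnz : ∃ n : ℕ, f n ≠ 0) (htoe : IsToeplitz f) :
    ∀ ε : ℝ, 0 < ε → ∃ T : ℕ, 1 ≤ T ∧
      Filter.limsup
        (fun N : ℕ => (1 : ℝ) / N *
          (((Finset.Icc 1 N).filter (fun n => n ∉ PerSet f T)).card : ℝ))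
        Filter.atTop < ε := by
  intro ε hε
  obtain ⟨m, hm1, hmem⟩ := htoe 1 le_rfl
  have hm : ∀ n' : ℕ, 1 ≤ n' → n' % m = 1 % m → f n' = 1 := by
    intro n' h1 h2
    exact (hmem.2 n' h1 h2).trans hf.1
  set K := m.primeFactors.card with hK
  obtain ⟨E₀, hE₀⟩ := pow_unbounded_of_one_lt ((K : ℝ) / ε) (one_lt_two (α := ℝ))
  set E := max E₀ 1 with hEdef
  have hE1 : 1 ≤ E := le_max_right _ _
  have hKE : (K : ℝ) / 2 ^ E < ε := by
    rw [div_lt_iff₀ (by positivity)]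
    have h2 : (2 : ℝ) ^ E₀ ≤ 2 ^ E := pow_le_pow_right₀ one_le_two (le_max_left _ _)
    rw [div_lt_iff₀ hε] at hE₀
    nlinarith [hε.le]
  refine ⟨m ^ E, Nat.one_le_iff_ne_zero.2 (pow_ne_zero _ (by omega)), ?_⟩
  have hbound : ∀ N : ℕ, (1 : ℝ) / N *
      (((Finset.Icc 1 N).filter (fun n => n ∉ PerSet f (m ^ E))).card : ℝ) ≤ (K : ℝ) / 2 ^ E := by
    intro N
    rcases Nat.eq_zero_or_pos N with rfl | hN
    · simp
      positivity
    · have hsub : (Finset.Icc 1 N).filter (fun n => n ∉ PerSet f (m ^ E)) ⊆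
          m.primeFactors.biUnion (fun p => (Finset.Icc 1 N).filter (fun n => p ^ E ∣ n)) := by
        intro n hn
        simp only [Finset.mem_filter, Finset.mem_Icc] at hn
        obtain ⟨⟨h1n, hnN⟩, hnot⟩ := hn
        by_contra hcon
        simp only [Finset.mem_biUnion, not_exists, Finset.mem_filter, Finset.mem_Icc,
          not_and] at hcon
        refine hnot ?_
        exact aux_perset f hf m hm1 hm E hE1 h1n
          (fun p hp hd => hcon p hp ⟨h1n, hnN⟩ hd)
      have hcard : (((Finset.Icc 1 N).filter (fun n => n ∉ PerSet f (m ^ E))).card : ℝ) ≤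
          (K : ℝ) * N / 2 ^ E := by
        have h1 : (((Finset.Icc 1 N).filter (fun n => n ∉ PerSet f (m ^ E))).card : ℝ) ≤
            ∑ p ∈ m.primeFactors,
              ((((Finset.Icc 1 N).filter (fun n => p ^ E ∣ n)).card : ℝ)) := by
          have := (Finset.card_le_card hsub).trans Finset.card_biUnion_le
          exact_mod_cast this
        refine h1.trans ?_
        have h2 : ∀ p ∈ m.primeFactors,
            ((((Finset.Icc 1 N).filter (fun n => p ^ E ∣ n)).card : ℝ)) ≤ (N : ℝ) / 2 ^ E := by
          intro p hp
          rw [aux_card_dvd_Icc]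
          refine (Nat.cast_div_le).trans ?_
          have hp2 : (2 : ℝ) ^ E ≤ (p : ℝ) ^ E := by
            have := (Nat.prime_of_mem_primeFactors hp).two_le
            gcongr
            exact_mod_cast this
          rw [Nat.cast_pow]
          gcongr
        refine (Finset.sum_le_sum h2).trans ?_
        rw [Finset.sum_const, nsmul_eq_mul, mul_div_assoc]
      calc (1 : ℝ) / N *
          (((Finset.Icc 1 N).filter (fun n => n ∉ PerSet f (m ^ E))).card : ℝ) ≤
          (1 : ℝ) / N * ((K : ℝ) * N / 2 ^ E) := by
            apply mul_le_mul_of_nonneg_left hcard (by positivity)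
      _ = (K : ℝ) / 2 ^ E := by
            have hN0 : (N : ℝ) ≠ 0 := Nat.cast_ne_zero.2 hN.ne'
            field_simp
  have hco : Filter.IsCoboundedUnder (· ≤ ·) Filter.atTop
      (fun N : ℕ => (1 : ℝ) / N *
        (((Finset.Icc 1 N).filter (fun n => n ∉ PerSet f (m ^ E))).card : ℝ)) :=
    Filter.isCoboundedUnder_le_of_le _ (fun N => by positivity)
  exact lt_of_le_of_lt
    (Filter.limsup_le_of_le hco (Filter.Eventually.of_forall hbound)) hKE

end
end

section
/- Let f : ℕ → ℂ be a nonzero multiplicative Toeplitz function and let m ≥ 1 be such that 1 ∈ Per_m(f). Then there exists a unique Dirichlet character χ of modulus m such that f(n) = χ(n) for every n ≥ 1 with gcd(n, m) = 1. -/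
open scoped BigOperators Classical

noncomputable section

lemma aux_rep (m : ℕ) (hm : 1 ≤ m) (b₀ t : ℕ) (ht1 : 1 ≤ t)
    (hb : b₀.Coprime m) (ht : t.Coprime m) :
    ∃ b : ℕ, 1 ≤ b ∧ b.Coprime t ∧ b.Coprime m ∧ (b : ZMod m) = (b₀ : ZMod m) := by
  obtain ⟨k, hk1, hk2⟩ := Nat.chineseRemainder ht.symm b₀ 1
  refine ⟨k + m * t, le_trans (Nat.mul_pos hm ht1) (Nat.le_add_left _ _), ?_, ?_, ?_⟩
  · have hbt : (k + m * t) % t = 1 % t := by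
      rw [Nat.add_mul_mod_self_right]; exact hk2
    have : Nat.gcd t (k + m * t) = Nat.gcd t 1 := by
      rw [Nat.gcd_rec t (k + m * t), Nat.gcd_rec t 1, hbt]
    simpa [Nat.Coprime, Nat.coprime_comm, Nat.gcd_comm] using this
  · have hbm : (k + m * t) % m = b₀ % m := by
      rw [Nat.add_mul_mod_self_left]; exact hk1
    have : Nat.gcd m (k + m * t) = Nat.gcd m b₀ := by
      rw [Nat.gcd_rec m (k + m * t), Nat.gcd_rec m b₀, hbm]
    have := this.trans hb.symm.gcd_eq_one
    simpa [Nat.Coprime, Nat.gcd_comm] using this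
  · rw [ZMod.natCast_eq_natCast_iff]
    calc (k + m * t) % m = k % m := Nat.add_mul_mod_self_left ..
    _ = b₀ % m := hk1

/-- Modular inverse representative coprime to a given `t`. -/
lemma aux_inv (m : ℕ) (hm : 1 ≤ m) (a t : ℕ) (ht1 : 1 ≤ t)
    (ha : a.Coprime m) (ht : t.Coprime m) :
    ∃ c : ℕ, 1 ≤ c ∧ c.Coprime t ∧ c.Coprime m ∧ ((a * c : ℕ) : ZMod m) = 1 := by
  haveI : NeZero m := ⟨by omega⟩
  set u := ZMod.unitOfCoprime a ha with hu
  obtain ⟨c, hc1, hct, hcm, hcast⟩ :=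
    aux_rep m hm ((↑(u⁻¹) : ZMod m).val) t ht1 (ZMod.val_coe_unit_coprime u⁻¹) ht
  refine ⟨c, hc1, hct, hcm, ?_⟩
  have : (c : ZMod m) = (↑(u⁻¹) : ZMod m) := by
    rw [hcast, ZMod.natCast_zmod_val]
  push_cast
  rw [this]
  have hau : (a : ZMod m) = ↑u := (ZMod.coe_unitOfCoprime a ha).symm
  rw [hau]
  simp

lemma aux_one (f : ℕ → ℂ) (m : ℕ) (hf1 : f 1 = 1) (h1 : 1 ∈ PerSet f m) :
    ∀ n : ℕ, 1 ≤ n → ((n : ℕ) : ZMod m) = 1 → f n = 1 := by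
  intro n hn hcast
  have : (n : ZMod m) = ((1 : ℕ) : ZMod m) := by simpa using hcast
  rw [ZMod.natCast_eq_natCast_iff'] at this
  rw [h1.2 n hn this, hf1]

lemma aux_wd (f : ℕ → ℂ) (hf : IsMult f) (m : ℕ) (hm : 1 ≤ m) (h1 : 1 ∈ PerSet f m) :
    ∀ a b : ℕ, 1 ≤ a → 1 ≤ b → a.Coprime m → b.Coprime m →
      (a : ZMod m) = (b : ZMod m) → f a = f b := by
  intro a b ha1 hb1 ham hbm hab
  obtain ⟨c, hc1, hct, hcm, hcast⟩ :=
    aux_inv m hm a (a * b) (Nat.mul_pos ha1 hb1) ham (ham.mul hbm)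
  have hca : Nat.Coprime a c := (hct.coprime_dvd_right (dvd_mul_right a b)).symm
  have hcb : Nat.Coprime b c := (hct.coprime_dvd_right (dvd_mul_left b a)).symm
  have hfac : f (a * c) = 1 := aux_one f m hf.1 h1 _ (Nat.mul_pos ha1 hc1) hcast
  have hbc : ((b * c : ℕ) : ZMod m) = 1 := by push_cast at hcast ⊢; rw [← hab]; exact hcast
  have hfbc : f (b * c) = 1 := aux_one f m hf.1 h1 _ (Nat.mul_pos hb1 hc1) hbc
  have h1' : f a * f c = 1 := by rw [← hf.2 a c hca]; exact hfac
  have h2' : f b * f c = 1 := by rw [← hf.2 b c hcb]; exact hfbc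
  have hfc : f c ≠ 0 := by intro h; rw [h, mul_zero] at h1'; exact zero_ne_one h1'
  exact mul_right_cancel₀ hfc (h1'.trans h2'.symm)

lemma aux_ne (f : ℕ → ℂ) (hf : IsMult f) (m : ℕ) (hm : 1 ≤ m) (h1 : 1 ∈ PerSet f m) :
    ∀ a : ℕ, 1 ≤ a → a.Coprime m → f a ≠ 0 := by
  intro a ha1 ham
  obtain ⟨c, hc1, hct, hcm, hcast⟩ := aux_inv m hm a a ha1 ham ham
  have hfac : f (a * c) = 1 := aux_one f m hf.1 h1 _ (Nat.mul_pos ha1 hc1) hcast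
  have : f a * f c = 1 := by rw [← hf.2 a c hct.symm]; exact hfac
  intro h; rw [h, zero_mul] at this; exact zero_ne_one this

theorem exists_unique_dirichlet_char_of_toeplitz
    (f : ℕ → ℂ) (hf : IsMult f) (hnz : ∃ n : ℕ, f n ≠ 0) (htoe : IsToeplitz f)
    (m : ℕ) (hm : 1 ≤ m) (h1 : 1 ∈ PerSet f m) :
    ∃! χ : ℕ → ℂ, IsDirichletCharFn m χ ∧
      ∀ n : ℕ, 1 ≤ n → Nat.Coprime n m → f n = χ n := by
  haveI : NeZero m := ⟨by omega⟩
  set rep : (ZMod m)ˣ → ℕ := fun u => (u : ZMod m).val + m with hrepdef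
  have hrep1 : ∀ u : (ZMod m)ˣ, 1 ≤ rep u := fun u => le_trans hm (Nat.le_add_left m _)
  have hrepco : ∀ u : (ZMod m)ˣ, (rep u).Coprime m := fun u =>
    Nat.coprime_add_self_left.mpr (ZMod.val_coe_unit_coprime u)
  have hrepcast : ∀ u : (ZMod m)ˣ, ((rep u : ℕ) : ZMod m) = (u : ZMod m) := by
    intro u
    show (((u : ZMod m).val + m : ℕ) : ZMod m) = (u : ZMod m)
    push_cast
    rw [ZMod.natCast_zmod_val, ZMod.natCast_self, add_zero]
  have hmul : ∀ u v : (ZMod m)ˣ, f (rep (u * v)) = f (rep u) * f (rep v) := by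
    intro u v
    obtain ⟨b, hb1, hbt, hbm, hbcast⟩ :=
      aux_rep m hm (rep v) (rep u) (hrep1 u) (hrepco v) (hrepco u)
    have h1' : f (rep (u * v)) = f (rep u * b) := by
      apply aux_wd f hf m hm h1 _ _ (hrep1 _) (Nat.mul_pos (hrep1 u) hb1)
        (hrepco _) ((hrepco u).mul hbm)
      push_cast
      rw [hrepcast, hbcast, hrepcast, hrepcast]
      simp
    have h2' : f b = f (rep v) :=
      aux_wd f hf m hm h1 b (rep v) hb1 (hrep1 v) hbm (hrepco v)
        hbcast
    rw [h1', hf.2 _ _ hbt.symm, h2']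
  have hne : ∀ u : (ZMod m)ˣ, f (rep u) ≠ 0 := fun u =>
    aux_ne f hf m hm h1 _ (hrep1 u) (hrepco u)
  let φ : (ZMod m)ˣ →* ℂˣ :=
  { toFun := fun u => Units.mk0 (f (rep u)) (hne u)
    map_one' := by
      ext
      simp only [Units.val_mk0, Units.val_one]
      exact aux_one f m hf.1 h1 _ (hrep1 1) (by rw [hrepcast]; simp)
    map_mul' := fun u v => by
      ext
      simp only [Units.val_mk0, Units.val_mul]
      exact hmul u v }
  let χ₀ : DirichletCharacter ℂ m := MulChar.ofUnitHom φ
  have hχval : ∀ n : ℕ, 1 ≤ n → n.Coprime m → f n = χ₀ ((n : ZMod m)) := by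
    intro n hn hco
    set u := ZMod.unitOfCoprime n hco with hudef
    have hcu : ((n : ℕ) : ZMod m) = ↑u := (ZMod.coe_unitOfCoprime n hco).symm
    rw [hcu]
    have : χ₀ ↑u = ↑(φ u) := MulChar.ofUnitHom_coe φ u
    rw [this]
    have : (↑(φ u) : ℂ) = f (rep u) := rfl
    rw [this]
    exact aux_wd f hf m hm h1 n (rep u) hn (hrep1 u) hco (hrepco u)
      (hcu.trans (hrepcast u).symm)
  refine ⟨fun n => χ₀ ((n : ZMod m)), ⟨⟨χ₀, fun n => rfl⟩, fun n hn hco => hχval n hn hco⟩, ?_⟩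
  rintro χ' ⟨⟨χ₀', hχ'⟩, hag⟩
  funext n
  show χ' n = χ₀ ((n : ZMod m))
  rw [hχ' n]
  by_cases hu : IsUnit ((n : ℕ) : ZMod m)
  · set n' := n % m + m with hn'def
    have hn'cast : ((n' : ℕ) : ZMod m) = ((n : ℕ) : ZMod m) := by
      show (((n % m + m : ℕ)) : ZMod m) = ((n : ℕ) : ZMod m)
      push_cast
      rw [ZMod.natCast_mod, ZMod.natCast_self, add_zero]
    have hn'1 : 1 ≤ n' := le_trans hm (Nat.le_add_left m _)
    have hn'co : n'.Coprime m := by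
      rw [← ZMod.isUnit_iff_coprime, hn'cast]; exact hu
    calc χ₀' ((n : ZMod m)) = χ₀' ((n' : ZMod m)) := by rw [hn'cast]
      _ = χ' n' := (hχ' n').symm
      _ = f n' := (hag n' hn'1 hn'co).symm
      _ = χ₀ ((n' : ZMod m)) := hχval n' hn'1 hn'co
      _ = χ₀ ((n : ZMod m)) := by rw [hn'cast]
  · rw [MulChar.map_nonunit χ₀' hu, MulChar.map_nonunit χ₀ hu]
end
end

section
/- Let f : ℕ → ℂ be a Toeplitz function (not necessarily multiplicative), let p be a prime and b ∈ ℕ. Assume that for every s ≥ 1 there exists M ≥ 1 with s ∈ Per_M(f) and ν_p(M) ≤ b. If n ≥ 1 and K ≥ 1 satisfy n ∈ Per_K(f), then n ∈ Per_{K̄}(f), where K̄ := p^b · (K / p^{ν_p(K)}) (i.e. K̄ is obtained from K by replacing its p-adic valuation by b). -/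
open scoped BigOperators Classical

noncomputable section

theorem perSet_of_replace_padic_valuation
    (f : ℕ → ℂ) (htoe : IsToeplitz f) (p : ℕ) (hp : Nat.Prime p) (b : ℕ)
    (h : ∀ s : ℕ, 1 ≤ s → ∃ M : ℕ, 1 ≤ M ∧ s ∈ PerSet f M ∧ M.factorization p ≤ b)
    (n K : ℕ) (hn : 1 ≤ n) (hK : 1 ≤ K) (hnK : n ∈ PerSet f K) :
    n ∈ PerSet f (p ^ b * (K / p ^ K.factorization p)) := by
  obtain ⟨hn1, hnper⟩ := hnK
  refine ⟨hn, fun n' hn' hmod => ?_⟩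
  obtain ⟨M, hM1, ⟨_, hMper⟩, hMb⟩ := h n' hn'
  have hK0 : K ≠ 0 := by omega
  have hM0 : M ≠ 0 := by omega
  have hcomp0 : (K / p ^ K.factorization p) ≠ 0 := (Nat.ordCompl_pos p hK0).ne'
  have hg0 : Nat.gcd M K ≠ 0 := Nat.gcd_ne_zero_left hM0
  have hKb0 : p ^ b * (K / p ^ K.factorization p) ≠ 0 :=
    mul_ne_zero (pow_ne_zero b hp.pos.ne') hcomp0
  -- gcd M K divides the new modulus
  have hdvd : Nat.gcd M K ∣ p ^ b * (K / p ^ K.factorization p) := by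
    rw [← Nat.factorization_le_iff_dvd hg0 hKb0]
    rw [Nat.factorization_mul (pow_ne_zero b hp.pos.ne') hcomp0,
      Nat.Prime.factorization_pow hp, Nat.factorization_ordCompl]
    intro q
    simp only [Finsupp.coe_add, Pi.add_apply, Finsupp.single_apply, Finsupp.erase_apply]
    by_cases hq : q = p
    · subst hq
      have h1 : (Nat.gcd M K).factorization q ≤ M.factorization q := by
        have := (Nat.factorization_le_iff_dvd hg0 hM0).mpr (Nat.gcd_dvd_left M K)
        exact this q
      simp only [if_pos rfl]
      split_ifs <;> omega
    · simp only [if_neg (Ne.symm hq), if_neg hq, zero_add]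
      have := (Nat.factorization_le_iff_dvd hg0 hK0).mpr (Nat.gcd_dvd_right M K)
      exact this q
  have hcong : n' ≡ n [MOD Nat.gcd M K] :=
    Nat.ModEq.of_dvd hdvd hmod
  obtain ⟨N, hN1, hN2⟩ := Nat.chineseRemainder' hcong
  have hN'1 : 1 ≤ N + M * K := by
    have : 1 ≤ M * K := Nat.one_le_iff_ne_zero.mpr (mul_ne_zero hM0 hK0)
    omega
  have e1 : f (N + M * K) = f n' := by
    apply hMper (N + M * K) hN'1
    have : (N + M * K) % M = N % M := Nat.add_mul_mod_self_left N M K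
    rw [this]; exact hN1
  have e2 : f (N + M * K) = f n := by
    apply hnper (N + M * K) hN'1
    have : (N + M * K) % K = N % K := Nat.add_mul_mod_self_right N M K
    rw [this]; exact hN2
  rw [← e1, e2]
end
end

section
/- Let θ be a Dirichlet character of modulus m, let q_1, …, q_u be distinct primes, and let κ_1, …, κ_u : ℕ → ℂ be arbitrary functions. Let f be the multiplicative function determined by f(1) = 1, f(p^k) = θ(p^k) for every prime p ∉ {q_1, …, q_u} and k ≥ 1, and f(q_j^k) = κ_j(k) for j = 1, …, u and k ≥ 1. Then: (a) for every n ≥ 1, writing v_j := ν_{q_j}(n), one has n ∈ Per_T(f) with T := q_1^{v_1+1} ⋯ q_u^{v_u+1} · m; (b) consequently f is Toeplitz. -/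
open scoped BigOperators Classical

noncomputable section

private lemma mult_prod_aux (f : ℕ → ℂ) (hf : IsMult f) {ι : Type*} (s : Finset ι) (g : ι → ℕ)
    (h : ∀ i ∈ s, ∀ j ∈ s, i ≠ j → Nat.Coprime (g i) (g j)) :
    f (∏ i ∈ s, g i) = ∏ i ∈ s, f (g i) := by
  induction s using Finset.cons_induction with
  | empty => simpa using hf.1
  | cons a s has ih =>
    rw [Finset.prod_cons, Finset.prod_cons,
      hf.2 _ _ (Nat.Coprime.prod_right fun i hi =>
        h a (by simp) i (by simp [hi]) (by rintro rfl; exact has hi)),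
      ih (fun i hi j hj hij => h i (by simp [hi]) j (by simp [hj]) hij)]

private lemma prod_dvd_aux {ι : Type*} (s : Finset ι) (g : ι → ℕ) (n : ℕ)
    (h : ∀ i ∈ s, ∀ j ∈ s, i ≠ j → Nat.Coprime (g i) (g j))
    (hd : ∀ i ∈ s, g i ∣ n) : (∏ i ∈ s, g i) ∣ n := by
  induction s using Finset.cons_induction with
  | empty => simp
  | cons a s has ih =>
    rw [Finset.prod_cons]
    exact Nat.Coprime.mul_dvd_of_dvd_of_dvd
      (Nat.Coprime.prod_right fun i hi =>
        h a (by simp) i (by simp [hi]) (by rintro rfl; exact has hi))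
      (hd a (by simp))
      (ih (fun i hi j hj hij => h i (by simp [hi]) j (by simp [hj]) hij)
        (fun i hi => hd i (by simp [hi])))

theorem modified_character_is_toeplitz
    (m : ℕ) (hm : 1 ≤ m) (θ : ℕ → ℂ) (hθ : IsDirichletCharFn m θ)
    (u : ℕ) (q : Fin u → ℕ) (hq : ∀ j, Nat.Prime (q j)) (hqinj : Function.Injective q)
    (κ : Fin u → ℕ → ℂ) (f : ℕ → ℂ) (hf : IsMult f)
    (hfθ : ∀ (p k : ℕ), Nat.Prime p → 1 ≤ k → (∀ j, p ≠ q j) → f (p ^ k) = θ (p ^ k))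
    (hfκ : ∀ (j : Fin u) (k : ℕ), 1 ≤ k → f (q j ^ k) = κ j k) :
    (∀ n : ℕ, 1 ≤ n →
      n ∈ PerSet f ((∏ j, q j ^ (n.factorization (q j) + 1)) * m)) ∧
    IsToeplitz f := by
  obtain ⟨χ₀, hχ⟩ := hθ
  have hθmul : ∀ a b : ℕ, θ (a * b) = θ a * θ b := fun a b => by
    rw [hχ, hχ, hχ, Nat.cast_mul, map_mul]
  have hθ1 : θ 1 = 1 := by rw [hχ]; simp
  have hcop : ∀ (a b : ℕ) (i j : Fin u), i ≠ j →
      Nat.Coprime (q i ^ a) (q j ^ b) := fun a b i j hij =>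
    Nat.Coprime.pow _ _ ((Nat.coprime_primes (hq i) (hq j)).mpr (fun h => hij (hqinj h)))
  have hA : ∀ r : ℕ, 1 ≤ r → (∀ j, ¬ q j ∣ r) → f r = θ r := by
    intro r
    induction r using Nat.recOnPosPrimePosCoprime with
    | prime_pow p k hp' hk =>
      intro _ h
      refine hfθ p k hp' hk fun j hj => h j ?_
      exact hj ▸ dvd_pow_self p (by omega)
    | zero => intro h; omega
    | one => intro _ _; rw [hf.1, hθ1]
    | coprime a b ha hb hab iha ihb =>
      intro _ h
      rw [hf.2 a b hab, hθmul,
        iha (by omega) (fun j hj => h j (hj.mul_right b)),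
        ihb (by omega) (fun j hj => h j (hj.mul_left a))]
  have decomp : ∀ x : ℕ, 1 ≤ x →
      f x = (∏ j, f (q j ^ x.factorization (q j))) *
        θ (x / ∏ j, q j ^ x.factorization (q j)) := by
    intro x hx
    have hx0 : x ≠ 0 := by omega
    set Q := ∏ j, q j ^ x.factorization (q j) with hQ
    have hQdvd : Q ∣ x := prod_dvd_aux _ _ _ (fun i _ j _ hij => hcop _ _ i j hij)
      (fun i _ => Nat.ordProj_dvd x (q i))
    set r := x / Q with hr
    have hxQr : x = Q * r := (Nat.mul_div_cancel' hQdvd).symm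
    have hrnd : ∀ j, ¬ q j ∣ r := by
      intro j hj
      refine Nat.pow_succ_factorization_not_dvd hx0 (hq j) ?_
      have hd2 : q j ^ x.factorization (q j) * q j ∣ Q * r :=
        mul_dvd_mul (Finset.dvd_prod_of_mem _ (Finset.mem_univ j)) hj
      rw [← pow_succ, ← hxQr] at hd2
      exact hd2
    have hrpos : 1 ≤ r := by
      rcases Nat.eq_zero_or_pos r with h | h
      · rw [h, mul_zero] at hxQr; omega
      · exact h
    have hcopQr : Nat.Coprime Q r :=
      Nat.Coprime.prod_left fun i _ =>
        Nat.Coprime.pow_left _ (((hq i).coprime_iff_not_dvd).mpr (hrnd i))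
    calc f x = f Q * f r := by rw [hxQr, hf.2 _ _ hcopQr]
    _ = _ := by
        rw [mult_prod_aux f hf _ _ (fun i _ j _ hij => hcop _ _ i j hij), hA r hrpos hrnd]
  have key : ∀ n : ℕ, 1 ≤ n →
      n ∈ PerSet f ((∏ j, q j ^ (n.factorization (q j) + 1)) * m) := by
    intro n hn
    refine ⟨hn, ?_⟩
    intro n' hn' hmod
    have hn0 : n ≠ 0 := by omega
    have hn'0 : n' ≠ 0 := by omega
    have hmodeq : n' ≡ n [MOD (∏ j, q j ^ (n.factorization (q j) + 1)) * m] := hmod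
    have hdvdT : ∀ j, q j ^ (n.factorization (q j) + 1) ∣
        (∏ j, q j ^ (n.factorization (q j) + 1)) * m :=
      fun j => dvd_mul_of_dvd_left (Finset.dvd_prod_of_mem _ (Finset.mem_univ j)) m
    have hfac : ∀ j, n'.factorization (q j) = n.factorization (q j) := by
      intro j
      have hmq : n' ≡ n [MOD q j ^ (n.factorization (q j) + 1)] :=
        hmodeq.of_dvd (hdvdT j)
      have h1 : q j ^ n.factorization (q j) ∣ n' := by
        have hmq' : n' ≡ n [MOD q j ^ n.factorization (q j)] :=
          hmq.of_dvd (pow_dvd_pow _ (by omega))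
        have := (hmq.of_dvd (pow_dvd_pow _ (Nat.le_succ _))).dvd
        -- use Int divisibility: q^v ∣ n and q^v ∣ n - n'
        have hd : ((q j ^ n.factorization (q j) : ℕ) : ℤ) ∣ (n : ℤ) - n' :=
          (Nat.modEq_iff_dvd).mp hmq'
        have hdn : ((q j ^ n.factorization (q j) : ℕ) : ℤ) ∣ (n : ℤ) :=
          Int.natCast_dvd_natCast.mpr (Nat.ordProj_dvd n (q j))
        have : ((q j ^ n.factorization (q j) : ℕ) : ℤ) ∣ (n' : ℤ) := by
          have := dvd_sub hdn hd
          simpa using this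
        exact_mod_cast Int.natCast_dvd_natCast.mp this
      have h2 : ¬ q j ^ (n.factorization (q j) + 1) ∣ n' := by
        intro hdvd
        have hd : ((q j ^ (n.factorization (q j) + 1) : ℕ) : ℤ) ∣ (n : ℤ) - n' :=
          (Nat.modEq_iff_dvd).mp hmq
        have : ((q j ^ (n.factorization (q j) + 1) : ℕ) : ℤ) ∣ (n : ℤ) := by
          have := dvd_add hd (Int.natCast_dvd_natCast.mpr hdvd)
          simpa using this
        exact Nat.pow_succ_factorization_not_dvd hn0 (hq j)
          (Int.natCast_dvd_natCast.mp this)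
      have hle := ((hq j).pow_dvd_iff_le_factorization hn'0).mp h1
      have hlt : ¬ (n.factorization (q j) + 1 ≤ n'.factorization (q j)) := fun h =>
        h2 (((hq j).pow_dvd_iff_le_factorization hn'0).mpr h)
      omega
    rw [decomp n hn, decomp n' hn']
    simp only [hfac]
    congr 1
    -- θ part
    set Q := ∏ j, q j ^ n.factorization (q j) with hQ
    have hQpos : 0 < Q := Finset.prod_pos fun j _ => pow_pos (hq j).pos _
    have hQdvd : Q ∣ n := prod_dvd_aux _ _ _ (fun i _ j _ hij => hcop _ _ i j hij)
      (fun i _ => Nat.ordProj_dvd n (q i))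
    have hQdvd' : Q ∣ n' := prod_dvd_aux _ _ _ (fun i _ j _ hij => hcop _ _ i j hij)
      (fun i _ => by rw [← hfac i]; exact Nat.ordProj_dvd n' (q i))
    set r := n / Q with hr
    set r' := n' / Q with hr'
    have hnQr : n = Q * r := (Nat.mul_div_cancel' hQdvd).symm
    have hn'Qr : n' = Q * r' := (Nat.mul_div_cancel' hQdvd').symm
    have hTfac : (∏ j, q j ^ (n.factorization (q j) + 1)) = Q * ∏ j, q j := by
      rw [hQ, ← Finset.prod_mul_distrib]
      exact Finset.prod_congr rfl fun j _ => pow_succ _ _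
    have hdInt : ((Q : ℤ) * ((∏ j, q j) * m)) ∣ (Q : ℤ) * ((r : ℤ) - r') := by
      have hd : (((∏ j, q j ^ (n.factorization (q j) + 1)) * m : ℕ) : ℤ) ∣
          (n : ℤ) - n' := (Nat.modEq_iff_dvd).mp hmodeq
      rw [hTfac] at hd
      have : (n : ℤ) - n' = (Q : ℤ) * ((r : ℤ) - r') := by
        rw [hnQr, hn'Qr]; push_cast; ring
      rw [this] at hd
      convert hd using 2
      push_cast; ring
    have h2 : ((∏ j, q j : ℕ) : ℤ) * (m : ℤ) ∣ (r : ℤ) - r' :=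
      (mul_dvd_mul_iff_left
        (by exact_mod_cast hQpos.ne' : (Q : ℤ) ≠ 0)).mp hdInt
    have hmdvd : (m : ℤ) ∣ (r : ℤ) - r' := dvd_trans (dvd_mul_left _ _) h2
    have hrr' : r' ≡ r [MOD m] := (Nat.modEq_iff_dvd).mpr hmdvd
    rw [hχ, hχ]
    congr 1
    exact (ZMod.natCast_eq_natCast_iff _ _ _).mpr hrr'
  refine ⟨key, fun n hn => ⟨(∏ j, q j ^ (n.factorization (q j) + 1)) * m, ?_, key n hn⟩⟩
  exact Nat.one_le_iff_ne_zero.mpr (Nat.mul_pos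
    (Finset.prod_pos fun j _ => pow_pos (hq j).pos _) hm).ne'
end
end

section
/- Let f : ℕ → ℂ be a nonzero multiplicative Toeplitz function and let m ≥ 1 satisfy 1 ∈ Per_m(f). Then every n ≥ 1 with gcd(n, m) = 1 satisfies n ∈ Per_m(f) and f(n) ≠ 0. Moreover, if f is completely multiplicative (f(ab) = f(a)f(b) for all a, b), then f(n)^{φ(m)} = 1 for every n with gcd(n, m) = 1, where φ is Euler's totient function. -/
open scoped BigOperators Classical

noncomputable section

lemma key_lemma (f : ℕ → ℂ) (hf : IsMult f)
    (m : ℕ) (hm : 1 ≤ m) (h1 : 1 ∈ PerSet f m)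
    (n : ℕ) (hn : 1 ≤ n) (hco : Nat.Coprime n m)
    (n' : ℕ) (hn' : 1 ≤ n') (hmod : n' % m = n % m) :
    f n' = f n ∧ f n ≠ 0 := by
  set t := Nat.totient m with ht_def
  have ht : 1 ≤ t := Nat.totient_pos.mpr hm
  -- n' is also coprime to m
  have hco' : Nat.Coprime n' m := by
    have : Nat.gcd m n' = Nat.gcd m n := by
      rw [Nat.gcd_rec m n', Nat.gcd_rec m n, hmod]
    exact Nat.Coprime.symm (by rw [Nat.Coprime, this]; exact hco.symm)
  set N := n * n' with hN_def
  have hN : 1 ≤ N := Nat.one_le_iff_ne_zero.mpr (by positivity)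
  have hcoN : Nat.Coprime m N := (hco.symm).mul_right hco'.symm
  obtain ⟨r₀, hr₀m, hr₀N⟩ := Nat.chineseRemainder hcoN (n ^ (t - 1)) 1
  set r := r₀ + m * N with hr_def
  have hr1 : 1 ≤ r := le_add_of_nonneg_of_le (Nat.zero_le _) (Nat.one_le_iff_ne_zero.mpr (by positivity))
  have hrm : r ≡ n ^ (t - 1) [MOD m] := by
    have : r % m = r₀ % m := Nat.add_mul_mod_self_left r₀ m N
    unfold Nat.ModEq
    rw [this]; exact hr₀m
  have hrN : r % N = 1 % N := by
    have : r % N = r₀ % N := Nat.add_mul_mod_self_right r₀ m N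
    rw [this]; exact hr₀N
  have hcorN : Nat.Coprime r N := by
    have : Nat.gcd N r = 1 := by
      rw [Nat.gcd_rec N r, hrN, ← Nat.gcd_rec N 1, Nat.gcd_one_right]
    exact Nat.Coprime.symm this
  have hpowt : n ^ (t - 1) * n = n ^ t := by
    rw [← pow_succ, Nat.sub_add_cancel ht]
  have hnt1 : n ^ t ≡ 1 [MOD m] := Nat.ModEq.pow_totient hco
  have hrn : r * n ≡ 1 [MOD m] := by
    calc r * n ≡ n ^ (t - 1) * n [MOD m] := hrm.mul_right n
      _ = n ^ t := hpowt
      _ ≡ 1 [MOD m] := hnt1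
  have hrn' : r * n' ≡ 1 [MOD m] := by
    have hmn : n' ≡ n [MOD m] := hmod
    calc r * n' ≡ n ^ (t - 1) * n [MOD m] := hrm.mul hmn
      _ = n ^ t := hpowt
      _ ≡ 1 [MOD m] := hnt1
  have h1m : (1 : ℕ) % m = 1 % m := rfl
  have hfrn : f (r * n) = 1 := by
    have := h1.2 (r * n) (Nat.one_le_iff_ne_zero.mpr (by positivity)) hrn
    rw [this, hf.1]
  have hfrn' : f (r * n') = 1 := by
    have := h1.2 (r * n') (Nat.one_le_iff_ne_zero.mpr (by positivity)) hrn'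
    rw [this, hf.1]
  have hcrn : Nat.Coprime r n := hcorN.coprime_dvd_right (Dvd.intro n' rfl)
  have hcrn' : Nat.Coprime r n' := hcorN.coprime_dvd_right (Dvd.intro_left n rfl)
  have e1 : f r * f n = 1 := by rw [← hf.2 r n hcrn]; exact hfrn
  have e2 : f r * f n' = 1 := by rw [← hf.2 r n' hcrn']; exact hfrn'
  have hfr : f r ≠ 0 := by
    intro h; rw [h, zero_mul] at e1; exact zero_ne_one e1
  have hfn : f n ≠ 0 := by
    intro h; rw [h, mul_zero] at e1; exact zero_ne_one e1
  refine ⟨?_, hfn⟩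
  have := e2.trans e1.symm
  exact mul_left_cancel₀ hfr this

lemma cm_pow (f : ℕ → ℂ) (h1 : f 1 = 1) (hcm : ∀ a b : ℕ, f (a * b) = f a * f b)
    (n k : ℕ) : f (n ^ k) = f n ^ k := by
  induction k with
  | zero => simpa using h1
  | succ k ih => rw [pow_succ, pow_succ, hcm, ih]

theorem coprime_mem_perSet_and_nonzero
    (f : ℕ → ℂ) (hf : IsMult f) (hnz : ∃ n : ℕ, f n ≠ 0) (htoe : IsToeplitz f)
    (m : ℕ) (hm : 1 ≤ m) (h1 : 1 ∈ PerSet f m) :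
    (∀ n : ℕ, 1 ≤ n → Nat.Coprime n m → n ∈ PerSet f m ∧ f n ≠ 0) ∧
    ((∀ a b : ℕ, f (a * b) = f a * f b) →
      ∀ n : ℕ, 1 ≤ n → Nat.Coprime n m → f n ^ Nat.totient m = 1) := by
  constructor
  · intro n hn hco
    refine ⟨⟨hn, fun n' hn' hmod => (key_lemma f hf m hm h1 n hn hco n' hn' hmod).1⟩, ?_⟩
    exact (key_lemma f hf m hm h1 n hn hco n hn rfl).2
  · intro hcm n hn hco
    have hnt : n ^ Nat.totient m ≡ 1 [MOD m] := Nat.ModEq.pow_totient hco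
    have h := h1.2 (n ^ Nat.totient m) (Nat.one_le_iff_ne_zero.mpr (by positivity)) hnt
    rw [cm_pow f hf.1 hcm] at h
    rw [h, hf.1]
end
end

section
/- Let f : ℕ → ℂ be a multiplicative Toeplitz function. Let n, k, m ≥ 1 be such that n ∈ Per_m(f), nk ∈ Per_m(f) and gcd(n, k, m) = 1. Then f(nk) = f(n)·f(k). -/
open scoped BigOperators Classical

noncomputable section

/-- In an arithmetic progression `n mod m` there is a term coprime to `k`,
provided `gcd(n, k, m) = 1`. -/
lemma exists_coprime_in_progression (n k m : ℕ) (hn : 1 ≤ n) (hk' : 1 ≤ k)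
    (hcop : Nat.gcd n (Nat.gcd k m) = 1) :
    ∃ n' : ℕ, 1 ≤ n' ∧ n' % m = n % m ∧ Nat.Coprime n' k := by
  set t : ℕ := ∏ p ∈ k.primeFactors.filter (fun p => ¬ p ∣ n), p with ht
  refine ⟨n + m * t, le_trans hn (Nat.le_add_right _ _), Nat.add_mul_mod_self_left _ _ _, ?_⟩
  by_contra hnc
  obtain ⟨p, hp, hpd, hpk⟩ := Nat.Prime.not_coprime_iff_dvd.mp hnc
  by_cases hpn : p ∣ n
  · have hpmt : p ∣ m * t := (Nat.dvd_add_right hpn).mp hpd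
    rcases hp.dvd_mul.mp hpmt with hpm | hpt
    · have : p ∣ 1 := hcop ▸ Nat.dvd_gcd hpn (Nat.dvd_gcd hpk hpm)
      exact hp.one_lt.ne' (Nat.dvd_one.mp this)
    · obtain ⟨q, hq, hpq⟩ := (Prime.dvd_finset_prod_iff hp.prime _).mp hpt
      have := Finset.mem_filter.mp hq
      have hpq' : p = q := ((Nat.prime_dvd_prime_iff_eq hp
        (Nat.prime_of_mem_primeFactors this.1)).mp hpq)
      exact this.2 (hpq' ▸ hpn)
  · have hpt : p ∣ t := Finset.dvd_prod_of_mem _ (Finset.mem_filter.mpr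
      ⟨Nat.mem_primeFactors.mpr ⟨hp, hpk, Nat.one_le_iff_ne_zero.mp hk'⟩, hpn⟩)
    exact hpn ((Nat.dvd_add_right (Dvd.dvd.mul_left hpt m)).mp (by rwa [Nat.add_comm] at hpd))

theorem mult_on_perSet
    (f : ℕ → ℂ) (hf : IsMult f) (htoe : IsToeplitz f)
    (n k m : ℕ) (hn : 1 ≤ n) (hk : 1 ≤ k) (hm : 1 ≤ m)
    (hnm : n ∈ PerSet f m) (hnkm : n * k ∈ PerSet f m)
    (hcop : Nat.gcd n (Nat.gcd k m) = 1) :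
    f (n * k) = f n * f k := by
  obtain ⟨n', hn', hmod, hcop'⟩ := exists_coprime_in_progression n k m hn hk hcop
  have h1 : f n' = f n := hnm.2 n' hn' hmod
  have h2 : f (n' * k) = f (n * k) := by
    refine hnkm.2 (n' * k) (Nat.one_le_iff_ne_zero.mpr (Nat.mul_ne_zero
      (Nat.one_le_iff_ne_zero.mp hn') (Nat.one_le_iff_ne_zero.mp hk))) ?_
    exact (Nat.ModEq.mul_right k (show n' ≡ n [MOD m] from hmod))
  rw [← h2, hf.2 n' k hcop', h1]
end
end

section
/- Let f : ℕ → ℂ be a nonzero multiplicative Toeplitz function and let m ≥ 1 satisfy 1 ∈ Per_m(f). Let n' ≥ 1 with gcd(n', m) = 1 and let t ≥ 1 be such that every prime divisor of t divides m. Then t·n' ∈ Per_{t·m}(f). In particular, every position n ≥ 1 has a period all of whose prime divisors divide m. -/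
open scoped BigOperators Classical

noncomputable section

private lemma coprime_of_primes {t x m : ℕ} (hspec : ∀ p : ℕ, Nat.Prime p → p ∣ t → p ∣ m)
    (hx : Nat.Coprime x m) : Nat.Coprime t x := by
  by_contra h
  have hp : (Nat.gcd t x).minFac.Prime := Nat.minFac_prime h
  have h1 : (Nat.gcd t x).minFac ∣ t := (Nat.minFac_dvd _).trans (Nat.gcd_dvd_left _ _)
  have h2 : (Nat.gcd t x).minFac ∣ x := (Nat.minFac_dvd _).trans (Nat.gcd_dvd_right _ _)
  have h3 : (Nat.gcd t x).minFac ∣ m := hspec _ hp h1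
  have : (Nat.gcd t x).minFac ∣ 1 := hx ▸ Nat.dvd_gcd h2 h3
  exact hp.ne_one (Nat.eq_one_of_dvd_one this)

private lemma split_lemma (s d : ℕ) (hs : s ≠ 0) (hd : d ≠ 0) :
    ∃ g u : ℕ, s = g * u ∧ 1 ≤ g ∧ 1 ≤ u ∧ Nat.Coprime u d ∧
      ∀ p : ℕ, Nat.Prime p → p ∣ g → p ∣ d := by
  set g := Nat.gcd s (d ^ s) with hgdef
  have hgs : g ∣ s := Nat.gcd_dvd_left _ _
  have hgpos : 0 < g := Nat.gcd_pos_of_pos_left _ (Nat.pos_of_ne_zero hs)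
  refine ⟨g, s / g, (Nat.mul_div_cancel' hgs).symm, hgpos, ?_, ?_, ?_⟩
  · exact Nat.div_pos (Nat.le_of_dvd (Nat.pos_of_ne_zero hs) hgs) hgpos
  · -- Coprime (s / g) d
    by_contra h
    set q := (Nat.gcd (s / g) d).minFac with hq
    have hqp : q.Prime := Nat.minFac_prime h
    have hqu : q ∣ s / g := (Nat.minFac_dvd _).trans (Nat.gcd_dvd_left _ _)
    have hqd : q ∣ d := (Nat.minFac_dvd _).trans (Nat.gcd_dvd_right _ _)
    set k := s.factorization q with hk
    have hks : k < s := Nat.factorization_lt q hs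
    have hqk1 : q ^ k ∣ s := Nat.ordProj_dvd s q
    have hqk2 : q ^ k ∣ d ^ s :=
      dvd_trans (pow_dvd_pow q hks.le) (pow_dvd_pow_of_dvd hqd s)
    have hqkg : q ^ k ∣ g := Nat.dvd_gcd hqk1 hqk2
    have : q ^ (k + 1) ∣ s := by
      have : q ^ k * q ∣ g * (s / g) := mul_dvd_mul hqkg hqu
      rw [Nat.mul_div_cancel' hgs] at this
      simpa [pow_succ] using this
    exact Nat.pow_succ_factorization_not_dvd hs hqp this
  · intro p hp hpg
    exact hp.dvd_of_dvd_pow (hpg.trans (Nat.gcd_dvd_right _ _))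

private lemma modeq_dvd_dvd {x y k p : ℕ} (h : x ≡ y [MOD k]) (hpk : p ∣ k) (hpx : p ∣ x) :
    p ∣ y := by
  have h2 : x ≡ y [MOD p] := h.of_dvd hpk
  have : y % p = 0 := by
    have := (Nat.ModEq.symm h2).trans (Nat.modEq_zero_iff_dvd.mpr hpx)
    simpa [Nat.ModEq] using this
  exact Nat.dvd_of_mod_eq_zero this

private lemma resid_const (f : ℕ → ℂ) (hf : IsMult f) (m : ℕ) (hm : 1 ≤ m)
    (h1 : 1 ∈ PerSet f m) (a b : ℕ) (ha : 1 ≤ a) (hb : 1 ≤ b)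
    (hbm : Nat.Coprime b m) (hab : a ≡ b [MOD m]) : f a = f b := by
  set i := b ^ (m.totient - 1) with hi
  have hipos : 1 ≤ i := Nat.one_le_pow _ _ hb
  have him : Nat.Coprime i m := Nat.Coprime.pow_left _ hbm
  have hbi : b * i ≡ 1 [MOD m] := by
    have ht : m.totient - 1 + 1 = m.totient := Nat.succ_pred_eq_of_pos (Nat.totient_pos.mpr hm)
    have : b * i = b ^ m.totient := by rw [hi, ← pow_succ', ht]
    rw [this]; exact Nat.ModEq.pow_totient hbm
  -- build c
  have hs : a * b ≠ 0 := Nat.mul_ne_zero (by omega) (by omega)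
  have hd : i * m ≠ 0 := Nat.mul_ne_zero (by omega) (by omega)
  obtain ⟨g, u, hgu, hg, hu, hucop, hgp⟩ := split_lemma (a * b) (i * m) hs hd
  set c := i + m * u with hc
  have hcpos : 1 ≤ c := by omega
  have hcm : c ≡ i [MOD m] := by
    show c % m = i % m
    simp [hc, Nat.add_mul_mod_self_left]
  have hsc : Nat.Coprime (a * b) c := by
    by_contra h
    set q := (Nat.gcd (a * b) c).minFac with hq
    have hqp : q.Prime := Nat.minFac_prime h
    have hqs : q ∣ a * b := (Nat.minFac_dvd _).trans (Nat.gcd_dvd_left _ _)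
    have hqc : q ∣ c := (Nat.minFac_dvd _).trans (Nat.gcd_dvd_right _ _)
    by_cases hqm : q ∣ m
    · -- then q ∣ i, contradicting Coprime i m
      have hqi : q ∣ i := modeq_dvd_dvd hcm hqm hqc
      have : q ∣ 1 := him ▸ Nat.dvd_gcd hqi hqm
      exact hqp.one_lt.ne' (Nat.eq_one_of_dvd_one this ▸ rfl)
    · by_cases hqd : q ∣ i * m
      · have hqi : q ∣ i := (hqp.dvd_mul.mp hqd).resolve_right hqm
        have hqmu : q ∣ m * u := (Nat.dvd_add_right hqi).mp (hc ▸ hqc)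
        have hqu : q ∣ u := (hqp.dvd_mul.mp hqmu).resolve_left hqm
        have : q ∣ 1 := hucop ▸ Nat.dvd_gcd hqu hqd
        exact hqp.one_lt.ne' (Nat.eq_one_of_dvd_one this ▸ rfl)
      · -- q ∤ i*m, so q ∤ g, so q ∣ u, then q ∣ c - m*u = i, contradiction
        have hqg : ¬ q ∣ g := fun h' => hqd (hgp q hqp h')
        have hqu : q ∣ u := ((hqp.dvd_mul.mp (hgu ▸ hqs)).resolve_left hqg)
        have hqi : q ∣ i := by
          have : q ∣ m * u := Dvd.dvd.mul_left hqu m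
          exact (Nat.dvd_add_iff_left this).mpr (hc ▸ hqc)
        exact hqd (Dvd.dvd.mul_right hqi m)
  have hac : Nat.Coprime a c := Nat.Coprime.coprime_dvd_left (dvd_mul_right a b) hsc
  have hbc : Nat.Coprime b c := Nat.Coprime.coprime_dvd_left (dvd_mul_left b a) hsc
  have hbc1 : b * c ≡ 1 [MOD m] := (hcm.mul_left b).trans hbi
  have hac1 : a * c ≡ 1 [MOD m] := (hab.mul_right c).trans hbc1
  have hval : ∀ x : ℕ, 1 ≤ x → x ≡ 1 [MOD m] → f x = 1 := by
    intro x hx hxm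
    have := h1.2 x hx hxm
    rw [this, hf.1]
  have e1 : f a * f c = 1 := by
    rw [← hf.2 a c hac]
    exact hval _ (Nat.mul_pos (by omega) (by omega)) hac1
  have e2 : f b * f c = 1 := by
    rw [← hf.2 b c hbc]
    exact hval _ (Nat.mul_pos (by omega) (by omega)) hbc1
  have hfc : f c ≠ 0 := by
    intro h0
    rw [h0, mul_zero] at e1
    exact one_ne_zero e1.symm
  exact mul_right_cancel₀ hfc (e1.trans e2.symm)

private lemma main_per (f : ℕ → ℂ) (hf : IsMult f) (m : ℕ) (hm : 1 ≤ m)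
    (h1 : 1 ∈ PerSet f m) (n' : ℕ) (hn' : 1 ≤ n') (hcop : Nat.Coprime n' m)
    (t : ℕ) (ht : 1 ≤ t) (hspec : ∀ p : ℕ, Nat.Prime p → p ∣ t → p ∣ m) :
    t * n' ∈ PerSet f (t * m) := by
  refine ⟨Nat.one_le_iff_ne_zero.mpr (Nat.mul_ne_zero (by omega) (by omega)), ?_⟩
  intro n'' hpos hmod
  have hme : n'' ≡ t * n' [MOD t * m] := hmod
  have htd : t ∣ n'' := by
    have h2 : n'' ≡ t * n' [MOD t] := hme.of_dvd (dvd_mul_right t m)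
    have h0 : n'' % t = (t * n') % t := h2
    rw [Nat.mul_mod_right] at h0
    exact Nat.dvd_of_mod_eq_zero h0
  obtain ⟨a, rfl⟩ := htd
  have ha1 : 1 ≤ a := Nat.pos_of_ne_zero (fun h => by simp [h] at hpos)
  have haeq : a ≡ n' [MOD m] := Nat.ModEq.mul_left_cancel' (by omega) hme
  have hacop : Nat.Coprime a m := by
    have := haeq.gcd_eq
    unfold Nat.Coprime
    rw [this]; exact hcop
  have hta : Nat.Coprime t a := coprime_of_primes hspec hacop
  have htn : Nat.Coprime t n' := coprime_of_primes hspec hcop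
  rw [hf.2 t a hta, hf.2 t n' htn,
    resid_const f hf m hm h1 a n' ha1 hn' hcop haeq]

theorem perSet_of_spectrum_multiple
    (f : ℕ → ℂ) (hf : IsMult f) (hnz : ∃ n : ℕ, f n ≠ 0) (htoe : IsToeplitz f)
    (m : ℕ) (hm : 1 ≤ m) (h1 : 1 ∈ PerSet f m)
    (n' : ℕ) (hn' : 1 ≤ n') (hcop : Nat.Coprime n' m)
    (t : ℕ) (ht : 1 ≤ t) (hspec : ∀ p : ℕ, Nat.Prime p → p ∣ t → p ∣ m) :
    t * n' ∈ PerSet f (t * m) ∧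
    ∀ n : ℕ, 1 ≤ n → ∃ T : ℕ, 1 ≤ T ∧ n ∈ PerSet f T ∧
      ∀ p : ℕ, Nat.Prime p → p ∣ T → p ∣ m := by
  constructor
  · exact main_per f hf m hm h1 n' hn' hcop t ht hspec
  · intro n hn
    obtain ⟨g, u, hgu, hg, hu, hucop, hgp⟩ :=
      split_lemma n m (by omega) (by omega)
    refine ⟨g * m, Nat.one_le_iff_ne_zero.mpr (Nat.mul_ne_zero (by omega) (by omega)), ?_, ?_⟩
    · rw [hgu]
      exact main_per f hf m hm h1 u hu hucop g hg hgp
    · intro p hp hpT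
      rcases hp.dvd_mul.mp hpT with h | h
      · exact hgp p hp h
      · exact h
end
end

section
/- Let f : ℕ → ℂ be a nonzero multiplicative Toeplitz function. Then there exists m₁ ≥ 1 such that for every m ≥ 1, one has 1 ∈ Per_m(f) if and only if m₁ divides m; that is, the set {m ≥ 1 : 1 ∈ Per_m(f)} equals the set of positive multiples of m₁. -/
open scoped BigOperators Classical

noncomputable section

lemma exists_split (a b C : ℕ) (ha : a ≠ 0) (hb : b ≠ 0) (hC : C ≠ 0)
    (haC : a ∣ C) (hbC : b ∣ C) :
    ∃ A B : ℕ, A ≠ 0 ∧ B ≠ 0 ∧ A * B = C ∧ Nat.Coprime A B ∧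
      Nat.gcd a A ∣ Nat.gcd a b ∧ Nat.gcd b B ∣ Nat.gcd a b := by
  classical
  set S : Finset ℕ := C.primeFactors.filter (fun p => a.factorization p ≤ b.factorization p)
    with hSdef
  set T : Finset ℕ := C.primeFactors.filter (fun p => ¬ a.factorization p ≤ b.factorization p)
    with hTdef
  set A : ℕ := ∏ p ∈ S, p ^ C.factorization p with hAdef
  set B : ℕ := ∏ p ∈ T, p ^ C.factorization p with hBdef
  have hSprime : ∀ p ∈ S, p.Prime := fun p hp =>
    Nat.prime_of_mem_primeFactors (Finset.mem_filter.mp hp).1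
  have hTprime : ∀ p ∈ T, p.Prime := fun p hp =>
    Nat.prime_of_mem_primeFactors (Finset.mem_filter.mp hp).1
  have hA0 : A ≠ 0 := by
    refine Finset.prod_ne_zero_iff.mpr fun p hp => pow_ne_zero _ (hSprime p hp).pos.ne'
  have hB0 : B ≠ 0 := by
    refine Finset.prod_ne_zero_iff.mpr fun p hp => pow_ne_zero _ (hTprime p hp).pos.ne'
  have hABC : A * B = C := by
    rw [hAdef, hBdef, hSdef, hTdef, Finset.prod_filter_mul_prod_filter_not]
    conv_rhs => rw [← Nat.factorization_prod_pow_eq_self hC]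
    rfl
  have hAfac : ∀ q : ℕ, A.factorization q = if q ∈ S then C.factorization q else 0 := by
    intro q
    rw [hAdef, Nat.factorization_prod (fun p hp => pow_ne_zero _ (hSprime p hp).pos.ne')]
    rw [Finset.sum_apply']
    rw [Finset.sum_congr rfl (fun p hp => by
      rw [(hSprime p hp).factorization_pow, Finsupp.single_apply])]
    exact Finset.sum_ite_eq' S q _
  have hBfac : ∀ q : ℕ, B.factorization q = if q ∈ T then C.factorization q else 0 := by
    intro q
    rw [hBdef, Nat.factorization_prod (fun p hp => pow_ne_zero _ (hTprime p hp).pos.ne')]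
    rw [Finset.sum_apply']
    rw [Finset.sum_congr rfl (fun p hp => by
      rw [(hTprime p hp).factorization_pow, Finsupp.single_apply])]
    exact Finset.sum_ite_eq' T q _
  have hcop : Nat.Coprime A B := by
    rw [← Nat.disjoint_primeFactors hA0 hB0]
    refine Finset.disjoint_left.mpr fun q hqA hqB => ?_
    have h1 : A.factorization q ≠ 0 := by
      rwa [← Nat.support_factorization, Finsupp.mem_support_iff] at hqA
    have h2 : B.factorization q ≠ 0 := by
      rwa [← Nat.support_factorization, Finsupp.mem_support_iff] at hqB
    rw [hAfac] at h1; rw [hBfac] at h2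
    by_cases hq : q ∈ S
    · have : q ∉ T := by
        rw [hSdef, Finset.mem_filter] at hq
        rw [hTdef, Finset.mem_filter]
        tauto
      simp [this] at h2
    · simp [hq] at h1
  have haCf : ∀ q, a.factorization q ≤ C.factorization q :=
    (Nat.factorization_le_iff_dvd ha hC).mpr haC
  have hbCf : ∀ q, b.factorization q ≤ C.factorization q :=
    (Nat.factorization_le_iff_dvd hb hC).mpr hbC
  have hgaA : Nat.gcd a A ∣ Nat.gcd a b := by
    rw [← Nat.factorization_le_iff_dvd (Nat.gcd_ne_zero_left ha) (Nat.gcd_ne_zero_left ha)]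
    intro q
    rw [Nat.factorization_gcd ha hA0, Nat.factorization_gcd ha hb]
    rw [Finsupp.inf_apply, Finsupp.inf_apply]
    rw [hAfac]
    by_cases hq : q ∈ S
    · have hab : a.factorization q ≤ b.factorization q := (Finset.mem_filter.mp hq).2
      simp only [if_pos hq]
      have := haCf q
      omega
    · simp only [if_neg hq]
      omega
  have hgbB : Nat.gcd b B ∣ Nat.gcd a b := by
    rw [← Nat.factorization_le_iff_dvd (Nat.gcd_ne_zero_left hb) (Nat.gcd_ne_zero_left ha)]
    intro q
    rw [Nat.factorization_gcd hb hB0, Nat.factorization_gcd ha hb]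
    rw [Finsupp.inf_apply, Finsupp.inf_apply]
    rw [hBfac]
    by_cases hq : q ∈ T
    · have hab : ¬ a.factorization q ≤ b.factorization q := (Finset.mem_filter.mp hq).2
      simp only [if_pos hq]
      have := hbCf q
      omega
    · simp only [if_neg hq]
      omega
  exact ⟨A, B, hA0, hB0, hABC, hcop, hgaA, hgbB⟩

lemma perSet_mono {f : ℕ → ℂ} {n m m' : ℕ} (h : m ∣ m') (hm : n ∈ PerSet f m) :
    n ∈ PerSet f m' :=
  ⟨hm.1, fun n' h1 hmod => hm.2 n' h1 (Nat.ModEq.of_dvd h hmod)⟩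

lemma one_mem_perSet_gcd {f : ℕ → ℂ} (hf : IsMult f) (htoe : IsToeplitz f)
    {a b : ℕ} (ha : 1 ≤ a) (hb : 1 ≤ b)
    (hPa : 1 ∈ PerSet f a) (hPb : 1 ∈ PerSet f b) :
    1 ∈ PerSet f (Nat.gcd a b) := by
  refine ⟨le_refl 1, fun n hn hmod => ?_⟩
  have hn1 : n ≡ 1 [MOD Nat.gcd a b] := hmod
  obtain ⟨c, hc1, hPc⟩ := htoe n hn
  set C : ℕ := Nat.lcm (Nat.lcm a b) c with hCdef
  have ha0 : a ≠ 0 := by omega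
  have hb0 : b ≠ 0 := by omega
  have hc0 : c ≠ 0 := by omega
  have hC0 : C ≠ 0 := Nat.lcm_ne_zero (Nat.lcm_ne_zero ha0 hb0) hc0
  have haC : a ∣ C := dvd_trans (Nat.dvd_lcm_left a b) (Nat.dvd_lcm_left _ c)
  have hbC : b ∣ C := dvd_trans (Nat.dvd_lcm_right a b) (Nat.dvd_lcm_left _ c)
  have hcC : c ∣ C := Nat.dvd_lcm_right _ c
  obtain ⟨A, B, hA0, hB0, hABC, hcop, hgaA, hgbB⟩ :=
    exists_split a b C ha0 hb0 hC0 haC hbC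
  -- construct u1 ≡ n [MOD A], ≡ 1 [MOD B]
  obtain ⟨u0, hu0A, hu0B⟩ := Nat.chineseRemainder hcop n 1
  set u1 : ℕ := u0 + A * B with hu1def
  have hu1pos : 1 ≤ u1 := by
    have : A * B ≠ 0 := by rw [hABC]; exact hC0
    omega
  have hu1A : u1 ≡ n [MOD A] := by
    have : u1 % A = u0 % A := Nat.add_mul_mod_self_left u0 A B
    exact Nat.ModEq.trans this hu0A
  have hu1B : u1 ≡ 1 [MOD B] := by
    have : u1 % B = u0 % B := Nat.add_mul_mod_self_right u0 A B
    exact Nat.ModEq.trans this hu0B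
  -- u1 ≡ 1 [MOD a]
  have hu1a : u1 ≡ 1 [MOD a] := by
    have h1 : u1 ≡ 1 [MOD Nat.gcd a A] :=
      (hu1A.of_dvd (Nat.gcd_dvd_right a A)).trans (hn1.of_dvd hgaA)
    have h2 : u1 ≡ 1 [MOD Nat.gcd a B] := hu1B.of_dvd (Nat.gcd_dvd_right a B)
    have hc2 : Nat.Coprime (Nat.gcd a A) (Nat.gcd a B) :=
      Nat.Coprime.coprime_dvd_left (Nat.gcd_dvd_right a A)
        (Nat.Coprime.coprime_dvd_right (Nat.gcd_dvd_right a B) hcop)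
    have h3 : u1 ≡ 1 [MOD Nat.gcd a A * Nat.gcd a B] :=
      (Nat.modEq_and_modEq_iff_modEq_mul hc2).mp ⟨h1, h2⟩
    exact h3.of_dvd (Nat.dvd_gcd_mul_gcd_iff_dvd_mul.mpr (hABC ▸ haC))
  -- construct v1 ≡ 1 [MOD A * u1], ≡ n [MOD B]
  have hcop2 : Nat.Coprime (A * u1) B := by
    have hBu : Nat.Coprime B u1 := by
      rw [Nat.Coprime, Nat.gcd_rec B u1, hu1B, ← Nat.gcd_rec, Nat.gcd_one_right]
    exact Nat.Coprime.mul hcop (Nat.coprime_comm.mp hBu)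
  obtain ⟨v0, hv0Au, hv0B⟩ := Nat.chineseRemainder hcop2 1 n
  set v1 : ℕ := v0 + A * u1 * B with hv1def
  have hv1pos : 1 ≤ v1 := by
    have : A * u1 * B ≠ 0 := mul_ne_zero (mul_ne_zero hA0 (by omega)) hB0
    omega
  have hv1Au : v1 ≡ 1 [MOD A * u1] := by
    have : v1 % (A * u1) = v0 % (A * u1) := Nat.add_mul_mod_self_left v0 (A * u1) B
    exact Nat.ModEq.trans this hv0Au
  have hv1B : v1 ≡ n [MOD B] := by
    have : v1 % B = v0 % B := Nat.add_mul_mod_self_right v0 (A * u1) B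
    exact Nat.ModEq.trans this hv0B
  have hv1A : v1 ≡ 1 [MOD A] := hv1Au.of_dvd (dvd_mul_right A u1)
  have hv1u1 : v1 ≡ 1 [MOD u1] := hv1Au.of_dvd (dvd_mul_left u1 A)
  -- v1 ≡ 1 [MOD b]
  have hv1b : v1 ≡ 1 [MOD b] := by
    have h1 : v1 ≡ 1 [MOD Nat.gcd b B] :=
      (hv1B.of_dvd (Nat.gcd_dvd_right b B)).trans (hn1.of_dvd hgbB)
    have h2 : v1 ≡ 1 [MOD Nat.gcd b A] := hv1A.of_dvd (Nat.gcd_dvd_right b A)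
    have hc2 : Nat.Coprime (Nat.gcd b A) (Nat.gcd b B) :=
      Nat.Coprime.coprime_dvd_left (Nat.gcd_dvd_right b A)
        (Nat.Coprime.coprime_dvd_right (Nat.gcd_dvd_right b B) hcop)
    have h3 : v1 ≡ 1 [MOD Nat.gcd b A * Nat.gcd b B] :=
      (Nat.modEq_and_modEq_iff_modEq_mul hc2).mp ⟨h2, h1⟩
    exact h3.of_dvd (Nat.dvd_gcd_mul_gcd_iff_dvd_mul.mpr (hABC ▸ hbC))
  -- coprime u1 v1
  have hcopuv : Nat.Coprime u1 v1 := by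
    rw [Nat.Coprime, Nat.gcd_rec u1 v1, hv1u1, ← Nat.gcd_rec, Nat.gcd_one_right]
  -- u1 * v1 ≡ n [MOD c]
  have hmulA : u1 * v1 ≡ n [MOD A] := by
    have := hu1A.mul hv1A
    rwa [mul_one] at this
  have hmulB : u1 * v1 ≡ n [MOD B] := by
    have := hu1B.mul hv1B
    rwa [one_mul] at this
  have hmulC : u1 * v1 ≡ n [MOD C] := by
    rw [← hABC]
    exact (Nat.modEq_and_modEq_iff_modEq_mul hcop).mp ⟨hmulA, hmulB⟩
  have hmulc : u1 * v1 ≡ n [MOD c] := hmulC.of_dvd hcC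
  -- conclude
  have hfu : f u1 = 1 := by
    have := hPa.2 u1 hu1pos hu1a
    rwa [hf.1] at this
  have hfv : f v1 = 1 := by
    have := hPb.2 v1 hv1pos hv1b
    rwa [hf.1] at this
  have hfn : f (u1 * v1) = f n :=
    hPc.2 (u1 * v1) (Nat.one_le_iff_ne_zero.mpr (mul_ne_zero (by omega) (by omega))) hmulc
  rw [hf.1, ← hfn, hf.2 u1 v1 hcopuv, hfu, hfv, mul_one]

theorem minimal_period_of_position_one
    (f : ℕ → ℂ) (hf : IsMult f) (hnz : ∃ n : ℕ, f n ≠ 0) (htoe : IsToeplitz f) :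
    ∃ m₁ : ℕ, 1 ≤ m₁ ∧ ∀ m : ℕ, 1 ≤ m → (1 ∈ PerSet f m ↔ m₁ ∣ m) := by
  have hex : ∃ m : ℕ, 1 ≤ m ∧ 1 ∈ PerSet f m := htoe 1 le_rfl
  classical
  set m₁ := Nat.find hex with hm₁def
  obtain ⟨hm₁pos, hm₁mem⟩ := Nat.find_spec hex
  refine ⟨m₁, hm₁pos, fun m hm => ⟨fun hmem => ?_, fun hdvd => perSet_mono hdvd hm₁mem⟩⟩
  have hg : 1 ∈ PerSet f (Nat.gcd m₁ m) := one_mem_perSet_gcd hf htoe hm₁pos hm hm₁mem hmem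
  have hgpos : 1 ≤ Nat.gcd m₁ m := Nat.gcd_pos_of_pos_left m hm₁pos
  have hle : m₁ ≤ Nat.gcd m₁ m := Nat.find_min' hex ⟨hgpos, hg⟩
  have : Nat.gcd m₁ m = m₁ :=
    Nat.le_antisymm (Nat.le_of_dvd (by omega) (Nat.gcd_dvd_left m₁ m)) hle
  rw [← this]
  exact Nat.gcd_dvd_right m₁ m
end
end

section
/- Let f : ℕ → ℂ be a nonzero multiplicative function that is M-periodic (f(n + M) = f(n) for all n ≥ 1). Then there exist a divisor t of M and a Dirichlet character θ of modulus t such that f(n) = θ(n) for all n with gcd(n, M) = 1, and moreover for every prime q and every ℓ ≥ 0 one has f(q^{ν_q(M/t)+ℓ}) = f(q^{ν_q(M/t)})·θ(q^ℓ). In particular f(q^{ν_q(M/t)+ℓ}) = 0 whenever q divides t and ℓ > 0. -/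
open scoped BigOperators Classical

noncomputable section

set_option maxHeartbeats 2000000 in
theorem periodic_multiplicative_structure
    (f : ℕ → ℂ) (hf : IsMult f) (hnz : ∃ n : ℕ, f n ≠ 0)
    (M : ℕ) (hM : 1 ≤ M) (hper : ∀ n : ℕ, 1 ≤ n → f (n + M) = f n) :
    ∃ (t : ℕ) (θ : ℕ → ℂ), t ∣ M ∧ IsDirichletCharFn t θ ∧
      (∀ n : ℕ, 1 ≤ n → Nat.Coprime n M → f n = θ n) ∧
      (∀ q : ℕ, Nat.Prime q → ∀ ℓ : ℕ,
        f (q ^ ((M / t).factorization q + ℓ)) =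
          f (q ^ ((M / t).factorization q)) * θ (q ^ ℓ)) ∧
      (∀ q : ℕ, Nat.Prime q → q ∣ t → ∀ ℓ : ℕ, 0 < ℓ →
        f (q ^ ((M / t).factorization q + ℓ)) = 0) := by
  classical
  obtain ⟨hf1, hfmul⟩ := hf
  have hM0 : M ≠ 0 := by omega
  -- full periodicity
  have periodk : ∀ k n : ℕ, 1 ≤ n → f (n + M * k) = f n := by
    intro k
    induction k with
    | zero => intro n hn; simp
    | succ k ih =>
      intro n hn
      have h1 : n + M * (k + 1) = (n + M * k) + M := by ring
      rw [h1, hper _ (by omega), ih n hn]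
  have keyeq : ∀ x y : ℕ, 1 ≤ x → 1 ≤ y → x ≡ y [MOD M] → f x = f y := by
    have base : ∀ n, 1 ≤ n → f n = f (n % M + M) := by
      intro n hn
      have h1 : n + M = (n % M + M) + M * (n / M) := by
        conv_lhs => rw [← Nat.div_add_mod n M]
        ring
      rw [← hper n hn, h1, periodk _ _ (by omega)]
    intro x y hx hy hxy
    rw [base x hx, base y hy]
    unfold Nat.ModEq at hxy
    rw [hxy]
  -- representative lemma
  have exrep : ∀ d x c : ℕ, d ∣ M → Nat.Coprime x d → 0 < c →
      ∃ n : ℕ, 1 ≤ n ∧ n ≡ x [MOD d] ∧ Nat.Coprime n M ∧ Nat.Coprime n c := by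
    intro d x c hd hx hc
    have hd0 : 0 < d := Nat.pos_of_dvd_of_pos hd (by omega)
    set T : Finset ℕ := (M * c).primeFactors.filter (fun p => ¬ p ∣ d) with hT
    set s : ℕ := ∏ p ∈ T, p with hs
    have hs0 : 0 < s := by
      apply Finset.prod_pos
      intro p hp
      rw [hT, Finset.mem_filter, Nat.mem_primeFactors] at hp
      exact hp.1.1.pos
    have hds : Nat.Coprime d s := by
      apply Nat.Coprime.prod_right
      intro p hp
      rw [hT, Finset.mem_filter, Nat.mem_primeFactors] at hp
      exact ((Nat.Prime.coprime_iff_not_dvd hp.1.1).mpr hp.2).symm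
    obtain ⟨n₀, hn₀d, hn₀s⟩ := Nat.chineseRemainder hds x 1
    refine ⟨n₀ + d * s, by have := Nat.mul_pos hd0 hs0; omega, ?_, ?_, ?_⟩
    · have h1 : (n₀ + d * s) ≡ n₀ [MOD d] := by
        show (n₀ + d * s) % d = n₀ % d
        rw [Nat.add_mul_mod_self_left]
      exact h1.trans hn₀d
    all_goals {
      have hnMc : Nat.Coprime (n₀ + d * s) (M * c) := by
        by_contra hcon
        obtain ⟨p, hp, hpn, hpMc⟩ := Nat.Prime.not_coprime_iff_dvd.mp hcon
        by_cases hpd : p ∣ d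
        · have h1 : (n₀ + d * s) ≡ x [MOD p] := by
            refine Nat.ModEq.of_dvd hpd ?_
            have h2 : (n₀ + d * s) ≡ n₀ [MOD d] := by
              show (n₀ + d * s) % d = n₀ % d
              rw [Nat.add_mul_mod_self_left]
            exact h2.trans hn₀d
          have h2 : p ∣ x := by
            have := (Nat.modEq_zero_iff_dvd).mpr hpn
            have h3 : x ≡ 0 [MOD p] := h1.symm.trans this
            exact (Nat.modEq_zero_iff_dvd).mp h3
          have h4 : p ∣ 1 := hx ▸ Nat.dvd_gcd h2 hpd
          exact hp.one_lt.ne' (Nat.dvd_one.mp h4)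
        · have hps : p ∣ s := by
            apply Finset.dvd_prod_of_mem
            rw [hT, Finset.mem_filter, Nat.mem_primeFactors]
            exact ⟨⟨hp, hpMc, Nat.mul_ne_zero hM0 (by omega)⟩, hpd⟩
          have h1 : (n₀ + d * s) ≡ 1 [MOD p] := by
            refine Nat.ModEq.of_dvd hps ?_
            have h2 : (n₀ + d * s) ≡ n₀ [MOD s] := by
              show (n₀ + d * s) % s = n₀ % s
              rw [Nat.add_mul_mod_self_right]
            exact h2.trans hn₀s
          have h2 : p ∣ 1 := by
            have := (Nat.modEq_zero_iff_dvd).mpr hpn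
            have h3 : (1 : ℕ) ≡ 0 [MOD p] := h1.symm.trans this
            exact (Nat.modEq_zero_iff_dvd).mp h3
          exact hp.one_lt.ne' (Nat.dvd_one.mp h2)
      first
        | exact hnMc.coprime_dvd_right (dvd_mul_right M c)
        | exact hnMc.coprime_dvd_right (dvd_mul_left c M)
    }
  -- the set of periods on coprime residues
  set S : Set ℕ := {d | d ∣ M ∧ ∀ x y : ℕ, 1 ≤ x → 1 ≤ y → Nat.Coprime x M →
      Nat.Coprime y M → x ≡ y [MOD d] → f x = f y} with hSdef
  have hMS : M ∈ S := ⟨dvd_rfl, fun x y hx hy _ _ h => keyeq x y hx hy h⟩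
  set t := sInf S with htdef
  have htS : t ∈ S := Nat.sInf_mem ⟨M, hMS⟩
  obtain ⟨htdvd, FT⟩ := htS
  have ht0 : 0 < t := Nat.pos_of_dvd_of_pos htdvd (by omega)
  haveI : NeZero t := ⟨by omega⟩
  -- minimality as divisibility
  have hmin : ∀ d, d ∈ S → t ∣ d := by
    intro d hd
    have hd0 : 0 < d := Nat.pos_of_dvd_of_pos hd.1 (by omega)
    have hgS : Nat.gcd t d ∈ S := by
      refine ⟨(Nat.gcd_dvd_left t d).trans htdvd, ?_⟩
      intro x y hx hy hxM hyM hxy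
      obtain ⟨z₀, hz1, hz2⟩ := Nat.chineseRemainder' hxy
      have hL : Nat.lcm t d ∣ M := Nat.lcm_dvd htdvd hd.1
      have hz₀L : Nat.Coprime z₀ (Nat.lcm t d) := by
        by_contra hcon
        obtain ⟨p, hp, hp1, hp2⟩ := Nat.Prime.not_coprime_iff_dvd.mp hcon
        have hptd : p ∣ t ∨ p ∣ d :=
          (Nat.Prime.dvd_mul hp).mp (hp2.trans (Nat.lcm_dvd_mul t d))
        have hpM : p ∣ M := (hp2.trans hL)
        rcases hptd with h | h
        · have hpx : p ∣ x := by
            have h3 : z₀ ≡ x [MOD p] := Nat.ModEq.of_dvd h hz1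
            have h4 : x ≡ 0 [MOD p] := h3.symm.trans ((Nat.modEq_zero_iff_dvd).mpr hp1)
            exact (Nat.modEq_zero_iff_dvd).mp h4
          have : p ∣ 1 := hxM ▸ Nat.dvd_gcd hpx hpM
          exact hp.one_lt.ne' (Nat.dvd_one.mp this)
        · have hpy : p ∣ y := by
            have h3 : z₀ ≡ y [MOD p] := Nat.ModEq.of_dvd h hz2
            have h4 : y ≡ 0 [MOD p] := h3.symm.trans ((Nat.modEq_zero_iff_dvd).mpr hp1)
            exact (Nat.modEq_zero_iff_dvd).mp h4
          have : p ∣ 1 := hyM ▸ Nat.dvd_gcd hpy hpM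
          exact hp.one_lt.ne' (Nat.dvd_one.mp this)
      obtain ⟨z, hzpos, hzmod, hzM, _⟩ := exrep (Nat.lcm t d) z₀ 1 hL hz₀L one_pos
      have hzx : z ≡ x [MOD t] :=
        (Nat.ModEq.of_dvd (Nat.dvd_lcm_left t d) hzmod).trans hz1
      have hzy : z ≡ y [MOD d] :=
        (Nat.ModEq.of_dvd (Nat.dvd_lcm_right t d) hzmod).trans hz2
      calc f x = f z := (FT z x hzpos hx hzM hxM hzx).symm
        _ = f y := hd.2 z y hzpos hy hzM hyM hzy
    have h1 : t ≤ Nat.gcd t d := Nat.sInf_le hgS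
    have h2 : Nat.gcd t d ≤ t := Nat.le_of_dvd ht0 (Nat.gcd_dvd_left t d)
    have h3 : Nat.gcd t d = t := le_antisymm h2 h1
    exact h3 ▸ Nat.gcd_dvd_right t d
  -- helper: coprimality of mod
  have copr_mod : ∀ a : ℕ, Nat.Coprime a t → Nat.Coprime (a % t) t := by
    intro a h
    have : Nat.gcd (a % t) t = Nat.gcd t a := (Nat.gcd_rec t a).symm
    rw [Nat.Coprime, this, Nat.gcd_comm]
    exact h
  -- lifting function for ZMod t
  have exlift : ∀ x : ZMod t, ∃ n : ℕ, 1 ≤ n ∧ Nat.Coprime n M ∧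
      (Nat.Coprime x.val t → n ≡ x.val [MOD t]) := by
    intro x
    by_cases hx : Nat.Coprime x.val t
    · obtain ⟨n, h1, h2, h3, _⟩ := exrep t x.val 1 htdvd hx one_pos
      exact ⟨n, h1, h3, fun _ => h2⟩
    · exact ⟨1, le_refl 1, Nat.coprime_one_left M, fun h => absurd h hx⟩
  choose lift lift_pos lift_cop lift_mod using exlift
  have lift_copt : ∀ x : ZMod t, Nat.Coprime (lift x) t :=
    fun x => (lift_cop x).coprime_dvd_right htdvd
  have unit_val_cop : ∀ x : ZMod t, IsUnit x → Nat.Coprime x.val t := by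
    intro x hx
    have := ZMod.val_coe_unit_coprime hx.unit
    rwa [hx.unit_spec] at this
  -- the character θ₀
  set θfun : ZMod t → ℂ := fun x => if IsUnit x then f (lift x) else 0 with hθfun
  have θfun_one : θfun 1 = 1 := by
    have hu : IsUnit (1 : ZMod t) := isUnit_one
    have hc : Nat.Coprime (1 : ZMod t).val t := by
      rw [ZMod.val_one_eq_one_mod]
      exact copr_mod 1 (Nat.coprime_one_left t)
    have hmod : lift 1 ≡ 1 [MOD t] := by
      refine (lift_mod 1 hc).trans ?_
      rw [ZMod.val_one_eq_one_mod]
      exact Nat.mod_modEq 1 t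
    have := FT (lift 1) 1 (lift_pos 1) le_rfl (lift_cop 1) (Nat.coprime_one_left M) hmod
    rw [hθfun]
    simp only [if_pos hu]
    rw [this, hf1]
  have θfun_mul : ∀ x y : ZMod t, θfun (x * y) = θfun x * θfun y := by
    intro x y
    by_cases hx : IsUnit x
    · by_cases hy : IsUnit y
      · have hxy : IsUnit (x * y) := hx.mul hy
        rw [hθfun]
        simp only [if_pos hx, if_pos hy, if_pos hxy]
        obtain ⟨a', ha1, ha2, ha3, ha4⟩ :=
          exrep t (lift x) (lift y) htdvd (lift_copt x) (lift_pos y)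
        have hmod1 : a' * lift y ≡ lift (x * y) [MOD t] := by
          have e1 : a' * lift y ≡ x.val * y.val [MOD t] :=
            Nat.ModEq.mul (ha2.trans (lift_mod x (unit_val_cop x hx)))
              (lift_mod y (unit_val_cop y hy))
          have e2 : x.val * y.val ≡ (x * y).val [MOD t] := by
            show x.val * y.val % t = (x * y).val % t
            rw [ZMod.val_mul, Nat.mod_mod_of_dvd _ dvd_rfl]
          exact (e1.trans e2).trans (lift_mod (x * y) (unit_val_cop _ hxy)).symm
        have e3 : f (a' * lift y) = f (lift (x * y)) :=
          FT (a' * lift y) (lift (x * y)) (Nat.mul_pos ha1 (lift_pos y)) (lift_pos _)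
            (ha3.mul (lift_cop y)) (lift_cop _) hmod1
        have e4 : f (a' * lift y) = f a' * f (lift y) := hfmul a' (lift y) ha4
        have e5 : f a' = f (lift x) :=
          FT a' (lift x) ha1 (lift_pos x) ha3 (lift_cop x) ha2
        rw [← e3, e4, e5]
      · have hxy : ¬ IsUnit (x * y) := fun h => hy (isUnit_of_mul_isUnit_right h)
        rw [hθfun]; simp only [if_neg hy, if_neg hxy, mul_zero]
    · have hxy : ¬ IsUnit (x * y) := fun h => hx (isUnit_of_mul_isUnit_left h)
      rw [hθfun]; simp only [if_neg hx, if_neg hxy, zero_mul]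
  set θ₀ : DirichletCharacter ℂ t :=
    { toFun := θfun
      map_one' := θfun_one
      map_mul' := θfun_mul
      map_nonunit' := fun a ha => if_neg ha } with hθ₀
  have θ₀_apply : ∀ x : ZMod t, θ₀ x = θfun x := fun x => rfl
  -- f agrees with θ₀ on integers coprime to M
  have cond3 : ∀ n : ℕ, 1 ≤ n → Nat.Coprime n M → f n = θ₀ ((n : ZMod t)) := by
    intro n hn hnM
    have hnt : Nat.Coprime n t := hnM.coprime_dvd_right htdvd
    have hu : IsUnit ((n : ZMod t)) := (ZMod.isUnit_iff_coprime n t).mpr hnt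
    have hval : ((n : ZMod t)).val = n % t := ZMod.val_natCast t n
    have hvc : Nat.Coprime ((n : ZMod t)).val t := by rw [hval]; exact copr_mod n hnt
    have hmod : lift ((n : ZMod t)) ≡ n [MOD t] := by
      refine (lift_mod _ hvc).trans ?_
      rw [hval]
      exact Nat.mod_modEq n t
    rw [θ₀_apply, hθfun]
    simp only [if_pos hu]
    exact (FT (lift _) n (lift_pos _) hn (lift_cop _) hnM hmod).symm
  -- vanishing condition
  have cond5 : ∀ q : ℕ, Nat.Prime q → q ∣ t → ∀ ℓ : ℕ, 0 < ℓ →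
      f (q ^ ((M / t).factorization q + ℓ)) = 0 := by
    intro q hq hqt ℓ hℓ
    set a := M.factorization q with ha
    set b := t.factorization q with hb
    have hν : (M / t).factorization q = a - b := by
      rw [Nat.factorization_div htdvd]; rfl
    by_contra hne
    rw [hν] at hne
    have hqM : q ∣ M := hqt.trans htdvd
    have hb1 : 1 ≤ b := hq.factorization_pos_of_dvd (by omega) hqt
    have hba : b ≤ a := by
      have := (Nat.factorization_le_iff_dvd (by omega) hM0).mpr htdvd
      exact Finsupp.le_def.mp this q
    set k := (a - b) + ℓ with hk
    set m := M / q ^ a with hm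
    have hmM : q ^ a * m = M := Nat.ordProj_mul_ordCompl_eq_self M q
    have hm0 : m ≠ 0 := (Nat.ordCompl_pos q hM0).ne'
    have hqm : ¬ q ∣ m := Nat.not_dvd_ordCompl hq hM0
    set j := a - k with hj
    have hDS : q ^ j * m ∈ S := by
      constructor
      · calc q ^ j * m ∣ q ^ a * m :=
              mul_dvd_mul_right (pow_dvd_pow q (by omega)) m
          _ = M := hmM
      · intro x y hx hy hxM hyM hxy
        have h2 : q ^ k * x ≡ q ^ k * y [MOD q ^ k * (q ^ j * m)] :=
          hxy.mul_left' _
        have h3 : M ∣ q ^ k * (q ^ j * m) := by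
          rw [← hmM, ← mul_assoc, ← pow_add]
          exact mul_dvd_mul_right (pow_dvd_pow q (by omega)) m
        have h4 : q ^ k * x ≡ q ^ k * y [MOD M] := Nat.ModEq.of_dvd h3 h2
        have h5 : f (q ^ k * x) = f (q ^ k * y) :=
          keyeq _ _ (Nat.mul_pos (pow_pos hq.pos k) hx) (Nat.mul_pos (pow_pos hq.pos k) hy) h4
        have hcx : Nat.Coprime (q ^ k) x := by
          refine Nat.Coprime.pow_left k ?_
          exact (hq.coprime_iff_not_dvd).mpr (fun h => by
            have : q ∣ 1 := hxM ▸ Nat.dvd_gcd h hqM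
            exact hq.one_lt.ne' (Nat.dvd_one.mp this))
        have hcy : Nat.Coprime (q ^ k) y := by
          refine Nat.Coprime.pow_left k ?_
          exact (hq.coprime_iff_not_dvd).mpr (fun h => by
            have : q ∣ 1 := hyM ▸ Nat.dvd_gcd h hqM
            exact hq.one_lt.ne' (Nat.dvd_one.mp this))
        rw [hfmul _ _ hcx, hfmul _ _ hcy] at h5
        exact mul_left_cancel₀ hne h5
    have htD : t ∣ q ^ j * m := hmin _ hDS
    have hbj : b ≤ j := by
      have h6 := (Nat.factorization_le_iff_dvd (by omega)
        (Nat.mul_ne_zero (pow_ne_zero _ hq.pos.ne') hm0)).mpr htD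
      have h7 := Finsupp.le_def.mp h6 q
      rwa [Nat.factorization_mul (pow_ne_zero _ hq.pos.ne') hm0, Finsupp.add_apply,
        hq.factorization_pow, Finsupp.single_eq_same,
        Nat.factorization_eq_zero_of_not_dvd hqm, add_zero] at h7
    omega
  refine ⟨t, fun n => θ₀ ((n : ZMod t)), htdvd, ⟨θ₀, fun n => rfl⟩,
    fun n hn hnM => cond3 n hn hnM, ?_, cond5⟩
  -- condition 4
  intro q hq ℓ
  show f (q ^ ((M / t).factorization q + ℓ)) =
      f (q ^ ((M / t).factorization q)) * θ₀ (((q ^ ℓ : ℕ) : ZMod t))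
  rcases Nat.eq_zero_or_pos ℓ with hℓ | hℓ
  · subst hℓ
    simp only [pow_zero, Nat.cast_one, map_one, add_zero, mul_one]
  by_cases hqt : q ∣ t
  · rw [cond5 q hq hqt ℓ hℓ]
    have hnu : ¬ IsUnit (((q ^ ℓ : ℕ) : ZMod t)) := by
      rw [ZMod.isUnit_iff_coprime]
      intro hc
      have : q ∣ 1 := hc ▸ Nat.dvd_gcd (dvd_pow_self q hℓ.ne') hqt
      exact hq.one_lt.ne' (Nat.dvd_one.mp this)
    rw [θ₀.map_nonunit hnu, mul_zero]
  · set a := M.factorization q with ha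
    have hb0 : t.factorization q = 0 := Nat.factorization_eq_zero_of_not_dvd hqt
    have hν : (M / t).factorization q = a := by
      rw [Nat.factorization_div htdvd]
      show M.factorization q - t.factorization q = a
      rw [hb0, Nat.sub_zero]
    set m := M / q ^ a with hm
    have hmM : q ^ a * m = M := Nat.ordProj_mul_ordCompl_eq_self M q
    have hm0 : m ≠ 0 := (Nat.ordCompl_pos q hM0).ne'
    have hqm : ¬ q ∣ m := Nat.not_dvd_ordCompl hq hM0
    have htm : t ∣ m := by
      have hcop : Nat.Coprime t (q ^ a) :=
        (((hq.coprime_iff_not_dvd).mpr hqt).symm).pow_right a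
      have : t ∣ q ^ a * m := hmM ▸ htdvd
      exact hcop.dvd_of_dvd_mul_left this
    have hqcm : Nat.Coprime (q ^ ℓ) m :=
      Nat.Coprime.pow_left ℓ ((hq.coprime_iff_not_dvd).mpr hqm)
    obtain ⟨s, hs1, hsmod, hsM, hsq⟩ := exrep m (q ^ ℓ) q (Nat.ordCompl_dvd M q)
      hqcm hq.pos
    have e1 : f (q ^ (a + ℓ)) = f (q ^ a * s) := by
      refine keyeq _ _ (pow_pos hq.pos _) (Nat.mul_pos (pow_pos hq.pos a) hs1) ?_
      have h1 : q ^ a * s ≡ q ^ a * q ^ ℓ [MOD q ^ a * m] := hsmod.mul_left' _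
      rw [hmM, ← pow_add] at h1
      exact h1.symm
    have e2 : f (q ^ a * s) = f (q ^ a) * f s :=
      hfmul _ _ (Nat.Coprime.pow_left a hsq.symm)
    have e3 : f s = θ₀ ((s : ZMod t)) := cond3 s hs1 hsM
    have e4 : ((s : ZMod t)) = (((q ^ ℓ : ℕ) : ZMod t)) :=
      (ZMod.natCast_eq_natCast_iff _ _ _).mpr (Nat.ModEq.of_dvd htm hsmod)
    rw [hν, e1, e2, e3, e4]
end
end

section
/- Let f ∈ M be a nonzero Toeplitz function. If χ is a Dirichlet character and t ∈ ℝ are such that D(f, n ↦ χ(n)·n^{it}) < ∞, then t = 0. -/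
open scoped BigOperators Classical

noncomputable section

open Complex
open scoped LSeries.notation

noncomputable section
namespace TPaux

/-- the point `σ + iτ` -/
def sC (σ τ : ℝ) : ℂ := (σ : ℂ) + (τ : ℂ) * Complex.I

@[simp] lemma sC_re (σ τ : ℝ) : (sC σ τ).re = σ := by simp [sC]
@[simp] lemma sC_im (σ τ : ℝ) : (sC σ τ).im = τ := by simp [sC]

lemma one_lt_p (p : Nat.Primes) : (1:ℝ) < ((p:ℕ):ℝ) := by
  exact_mod_cast p.prop.one_lt

lemma p_pos (p : Nat.Primes) : (0:ℝ) < ((p:ℕ):ℝ) := lt_trans one_pos (one_lt_p p)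

lemma re_cpow (p : Nat.Primes) (σ τ : ℝ) :
    (((p:ℕ) : ℂ) ^ (-(sC σ τ))).re
      = ((p:ℕ):ℝ) ^ (-σ) * Real.cos (τ * Real.log ((p:ℕ):ℝ)) := by
  have hp0 : ((p:ℕ) : ℂ) ≠ 0 := by
    exact_mod_cast (p_pos p).ne'
  rw [Complex.cpow_def_of_ne_zero hp0]
  rw [← Complex.natCast_log]
  rw [Complex.exp_re]
  have hre : ((Real.log ((p:ℕ)) : ℂ) * -(sC σ τ)).re = Real.log ((p:ℕ):ℝ) * (-σ) := by
    simp [sC, Complex.mul_re, ← Complex.natCast_log]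
  have him : ((Real.log ((p:ℕ)) : ℂ) * -(sC σ τ)).im = Real.log ((p:ℕ):ℝ) * (-τ) := by
    simp [sC, Complex.mul_im, ← Complex.natCast_log]
  rw [hre, him, Real.rpow_def_of_pos (p_pos p), mul_comm (Real.log _) (-τ), neg_mul,
    Real.cos_neg, mul_comm (Real.log _) (-σ), neg_mul]

lemma norm_cpow (p : Nat.Primes) (σ τ : ℝ) :
    ‖((p:ℕ) : ℂ) ^ (-(sC σ τ))‖ = ((p:ℕ):ℝ) ^ (-σ) := by
  rw [norm_natCast_cpow_of_pos p.prop.pos, neg_re, sC_re]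



/-- the constant `c = ∑_p p^{-2}`. -/
def cconst : ℝ := ∑' p : Nat.Primes, ((p:ℕ):ℝ) ^ (-2 : ℝ)

lemma summable_p2 : Summable (fun p : Nat.Primes => ((p:ℕ):ℝ) ^ (-2 : ℝ)) :=
  Nat.Primes.summable_rpow.mpr (by norm_num)

lemma summable_rpow_sigma {σ : ℝ} (hσ : 1 < σ) :
    Summable (fun p : Nat.Primes => ((p:ℕ):ℝ) ^ (-σ)) :=
  Nat.Primes.summable_rpow.mpr (by linarith)

lemma rpow_le_inv (p : Nat.Primes) {σ : ℝ} (hσ : 1 < σ) :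
    ((p:ℕ):ℝ) ^ (-σ) ≤ (((p:ℕ):ℝ))⁻¹ := by
  rw [← Real.rpow_neg_one]
  exact Real.rpow_le_rpow_of_exponent_le (one_lt_p p).le (by linarith)

lemma rpow_le_half (p : Nat.Primes) {σ : ℝ} (hσ : 1 < σ) :
    ((p:ℕ):ℝ) ^ (-σ) ≤ 1/2 := by
  refine (rpow_le_inv p hσ).trans ?_
  rw [one_div]
  apply inv_anti₀ (by norm_num)
  exact_mod_cast p.prop.two_le

lemma sq_rpow_le (p : Nat.Primes) {σ : ℝ} (hσ : 1 < σ) :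
    (((p:ℕ):ℝ) ^ (-σ))^2 ≤ ((p:ℕ):ℝ) ^ (-2:ℝ) := by
  have h1 : ((p:ℕ):ℝ) ^ (-σ) ≤ ((p:ℕ):ℝ) ^ (-1:ℝ) :=
    Real.rpow_le_rpow_of_exponent_le (one_lt_p p).le (by linarith)
  have h0 : (0:ℝ) ≤ ((p:ℕ):ℝ) ^ (-σ) := Real.rpow_nonneg (p_pos p).le _
  calc (((p:ℕ):ℝ) ^ (-σ))^2 ≤ (((p:ℕ):ℝ) ^ (-1:ℝ))^2 := by
        apply pow_le_pow_left₀ h0 h1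
    _ = ((p:ℕ):ℝ) ^ (-2:ℝ) := by
        rw [← Real.rpow_natCast (((p:ℕ):ℝ) ^ (-1:ℝ)) 2, ← Real.rpow_mul (p_pos p).le]
        norm_num

section chi
variable {N : ℕ} (χ : DirichletCharacter ℂ N)

lemma norm_w_le (p : Nat.Primes) (σ τ : ℝ) :
    ‖χ (p:ℕ) * ((p:ℕ) : ℂ) ^ (-(sC σ τ))‖ ≤ ((p:ℕ):ℝ) ^ (-σ) := by
  rw [norm_mul, norm_cpow]
  exact mul_le_of_le_one_left (Real.rpow_nonneg (p_pos p).le _) (χ.norm_le_one _)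

lemma summable_w {σ τ : ℝ} (hσ : 1 < σ) :
    Summable (fun p : Nat.Primes => χ (p:ℕ) * ((p:ℕ) : ℂ) ^ (-(sC σ τ))) := by
  apply Summable.of_norm
  exact (summable_rpow_sigma hσ).of_nonneg_of_le (fun p => norm_nonneg _)
    (fun p => norm_w_le χ p σ τ)


lemma abs_LSeries_pos {s : ℂ} (hs : 1 < s.re) : 0 < ‖L ↗χ s‖ := by
  rw [← DirichletCharacter.LSeries_eulerProduct_exp_log χ hs, Complex.norm_exp]
  exact Real.exp_pos _

lemma logAbs_LSeries {s : ℂ} (hs : 1 < s.re) :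
    Real.log (‖L ↗χ s‖)
      = (∑' p : Nat.Primes, -Complex.log (1 - χ (p:ℕ) * ((p:ℕ):ℂ) ^ (-s))).re := by
  rw [← DirichletCharacter.LSeries_eulerProduct_exp_log χ hs, Complex.norm_exp, Real.log_exp]

lemma re_tsum_sub_log_le {σ τ : ℝ} (hσ : 1 < σ) :
    |(∑' p : Nat.Primes, χ (p:ℕ) * ((p:ℕ):ℂ) ^ (-(sC σ τ))).re
      - Real.log (‖L ↗χ (sC σ τ)‖)| ≤ cconst := by
  have hsre : 1 < (sC σ τ).re := by simpa using hσ
  set w : Nat.Primes → ℂ := fun p => χ (p:ℕ) * ((p:ℕ):ℂ) ^ (-(sC σ τ)) with hw_def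
  have hw : Summable w := summable_w χ hσ
  have hwlt : ∀ p : Nat.Primes, ‖w p‖ < 1 := fun p =>
    lt_of_le_of_lt ((norm_w_le χ p σ τ).trans (rpow_le_half p hσ)) (by norm_num)
  have hlog : Summable (fun p : Nat.Primes => -Complex.log (1 - w p)) :=
    (hw.clog_one_sub).neg
  have key : ∀ p : Nat.Primes, ‖w p - (-Complex.log (1 - w p))‖ ≤ ((p:ℕ):ℝ) ^ (-2:ℝ) := by
    intro p
    have harg : (1 - w p).arg ≠ Real.pi := by
      rw [sub_eq_add_neg]
      exact Complex.slitPlane_arg_ne_pi <| Complex.mem_slitPlane_of_norm_lt_one <|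
        (norm_neg (w p)) ▸ hwlt p
    have h1 : -Complex.log (1 - w p) = Complex.log (1 - w p)⁻¹ :=
      (Complex.log_inv _ harg).symm
    have h2 : ‖w p - (-Complex.log (1 - w p))‖ = ‖Complex.log (1 - w p)⁻¹ - w p‖ := by
      rw [h1, ← norm_neg]; congr 1; ring
    rw [h2]
    have h3 := Complex.norm_log_one_sub_inv_sub_self_le (hwlt p)
    have hwn : ‖w p‖ ≤ ((p:ℕ):ℝ) ^ (-σ) := norm_w_le χ p σ τ
    have hwhalf : ‖w p‖ ≤ 1/2 := hwn.trans (rpow_le_half p hσ)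
    have h4 : (1 - ‖w p‖)⁻¹ ≤ 2 := by
      rw [inv_le_comm₀ (by linarith) (by norm_num)]
      linarith
    calc ‖Complex.log (1 - w p)⁻¹ - w p‖ ≤ ‖w p‖ ^ 2 * (1 - ‖w p‖)⁻¹ / 2 := h3
      _ ≤ ‖w p‖ ^ 2 * 2 / 2 := by
          gcongr
      _ = ‖w p‖ ^ 2 := by ring
      _ ≤ (((p:ℕ):ℝ) ^ (-σ))^2 := by
          apply pow_le_pow_left₀ (norm_nonneg _) hwn
      _ ≤ ((p:ℕ):ℝ) ^ (-2:ℝ) := sq_rpow_le p hσ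
  have hsd : Summable (fun p : Nat.Primes => w p - (-Complex.log (1 - w p))) := hw.sub hlog
  have hsn : Summable (fun p : Nat.Primes => ‖w p - (-Complex.log (1 - w p))‖) :=
    summable_p2.of_nonneg_of_le (fun p => norm_nonneg _) key
  rw [logAbs_LSeries χ hsre]
  rw [← Complex.sub_re, ← hw.tsum_sub hlog]
  calc |(∑' p : Nat.Primes, (w p - (-Complex.log (1 - w p)))).re|
      ≤ ‖∑' p : Nat.Primes, (w p - (-Complex.log (1 - w p)))‖ :=
        Complex.abs_re_le_norm _
    _ ≤ ∑' p : Nat.Primes, ‖w p - (-Complex.log (1 - w p))‖ := norm_tsum_le_tsum_norm hsn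
    _ ≤ ∑' p : Nat.Primes, ((p:ℕ):ℝ) ^ (-2:ℝ) := Summable.tsum_le_tsum key hsn summable_p2
    _ = cconst := rfl

end chi

section orth
variable (N : ℕ) [NeZero N]

/-- indicator of `p ≡ 1 mod N`. -/
def ind (p : Nat.Primes) : ℝ := if ((p:ℕ) : ZMod N) = 1 then 1 else 0

lemma ind_nonneg (p : Nat.Primes) : 0 ≤ ind N p := by
  unfold ind; split_ifs <;> norm_num

lemma ind_le_one (p : Nat.Primes) : ind N p ≤ 1 := by
  unfold ind; split_ifs <;> norm_num

lemma summable_ind_cpow {σ τ : ℝ} (hσ : 1 < σ) :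
    Summable (fun p : Nat.Primes => ((ind N p : ℝ):ℂ) * ((p:ℕ):ℂ) ^ (-(sC σ τ))) := by
  apply Summable.of_norm
  refine (summable_rpow_sigma hσ).of_nonneg_of_le (fun p => norm_nonneg _) (fun p => ?_)
  rw [norm_mul, norm_cpow]
  refine mul_le_of_le_one_left (Real.rpow_nonneg (p_pos p).le _) ?_
  rw [Complex.norm_real, Real.norm_eq_abs, _root_.abs_of_nonneg (ind_nonneg N p)]
  exact ind_le_one N p

lemma summable_ind_real {σ τ : ℝ} (hσ : 1 < σ) :
    Summable (fun p : Nat.Primes =>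
      ind N p * (((p:ℕ):ℝ) ^ (-σ) * Real.cos (τ * Real.log ((p:ℕ):ℝ)))) := by
  apply Summable.of_norm
  refine (summable_rpow_sigma hσ).of_nonneg_of_le (fun p => norm_nonneg _) (fun p => ?_)
  rw [Real.norm_eq_abs, abs_mul, abs_mul, _root_.abs_of_nonneg (ind_nonneg N p),
    _root_.abs_of_nonneg (Real.rpow_nonneg (p_pos p).le _)]
  calc ind N p * (((p:ℕ):ℝ) ^ (-σ) * |Real.cos (τ * Real.log ((p:ℕ):ℝ))|)
      ≤ 1 * (((p:ℕ):ℝ) ^ (-σ) * 1) := by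
        apply mul_le_mul (ind_le_one N p) ?_ (by positivity) (by norm_num)
        apply mul_le_mul_of_nonneg_left (Real.abs_cos_le_one _)
          (Real.rpow_nonneg (p_pos p).le _)
    _ = ((p:ℕ):ℝ) ^ (-σ) := by ring

lemma sum_chars_tsum {σ : ℝ} (τ : ℝ) (hσ : 1 < σ) :
    ∑ χ : DirichletCharacter ℂ N,
        (∑' p : Nat.Primes, χ (p:ℕ) * ((p:ℕ):ℂ) ^ (-(sC σ τ))).re
      = (N.totient : ℝ) * ∑' p : Nat.Primes,
          ind N p * (((p:ℕ):ℝ) ^ (-σ) * Real.cos (τ * Real.log ((p:ℕ):ℝ))) := by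
  classical
  have hsum : ∀ χ : DirichletCharacter ℂ N,
      Summable (fun p : Nat.Primes => χ (p:ℕ) * ((p:ℕ):ℂ) ^ (-(sC σ τ))) :=
    fun χ => summable_w χ hσ
  rw [← Complex.re_sum, ← Summable.tsum_finsetSum (fun χ _ => hsum χ)]
  have hpt : ∀ p : Nat.Primes,
      (∑ χ : DirichletCharacter ℂ N, χ (p:ℕ) * ((p:ℕ):ℂ) ^ (-(sC σ τ)))
        = ((N.totient : ℝ):ℂ) * (((ind N p : ℝ):ℂ) * ((p:ℕ):ℂ) ^ (-(sC σ τ))) := by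
    intro p
    rw [← Finset.sum_mul, DirichletCharacter.sum_characters_eq]
    unfold ind
    split_ifs with h
    · push_cast
      ring
    · push_cast
      ring
  rw [tsum_congr hpt, tsum_mul_left, Complex.re_ofReal_mul]
  congr 1
  rw [Complex.re_tsum (summable_ind_cpow N hσ)]
  refine tsum_congr (fun p => ?_)
  rw [Complex.re_ofReal_mul, re_cpow]

end orth

section bounds
variable {N : ℕ} [NeZero N]

lemma exists_log_bounds (χ : DirichletCharacter ℂ N) (τ : ℝ) (h : χ ≠ 1 ∨ τ ≠ 0) :
    ∃ lo hi : ℝ, ∀ σ ∈ Set.Ioc (1:ℝ) 2,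
      Real.log (‖L ↗χ (sC σ τ)‖) ∈ Set.Icc lo hi := by
  classical
  set K : Set ℂ := (fun x : ℝ => sC x τ) '' (Set.Icc 1 2) with hK_def
  have hcont : Continuous (fun x : ℝ => sC x τ) := by
    unfold sC; continuity
  have hKc : IsCompact K := (isCompact_Icc).image hcont
  have hKne : K.Nonempty := ⟨sC 1 τ, ⟨1, by norm_num, rfl⟩⟩
  have hmem : ∀ s ∈ K, s ≠ 1 ∨ χ ≠ 1 := by
    intro s hs
    rcases h with h | h
    · exact Or.inr h
    · left
      obtain ⟨x, _, rfl⟩ := hs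
      intro hc
      apply h
      have := congrArg Complex.im hc
      simpa using this
  have hconOn : ContinuousOn (fun s => ‖χ.LFunction s‖) K := by
    apply continuous_norm.comp_continuousOn
    intro s hs
    exact ((χ.differentiableAt_LFunction s (hmem s hs)).continuousAt).continuousWithinAt
  obtain ⟨a, haK, hmin⟩ := hKc.exists_isMinOn hKne hconOn
  obtain ⟨b, hbK, hmax⟩ := hKc.exists_isMaxOn hKne hconOn
  have hre : ∀ s ∈ K, 1 ≤ s.re := by
    rintro s ⟨x, hx, rfl⟩
    simpa using hx.1
  have hεpos : 0 < ‖χ.LFunction a‖ := by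
    rw [norm_pos_iff]
    exact χ.LFunction_ne_zero_of_one_le_re ((hmem a haK).symm.imp_left id) (hre a haK)
  refine ⟨Real.log (‖χ.LFunction a‖),
    Real.log (‖χ.LFunction b‖), fun σ hσ => ?_⟩
  have hσK : sC σ τ ∈ K := ⟨σ, ⟨hσ.1.le, hσ.2⟩, rfl⟩
  have heq : L ↗χ (sC σ τ) = χ.LFunction (sC σ τ) :=
    (χ.LFunction_eq_LSeries (by simpa using hσ.1)).symm
  have h1 : ‖χ.LFunction a‖ ≤ ‖χ.LFunction (sC σ τ)‖ := hmin hσK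
  have h2 : ‖χ.LFunction (sC σ τ)‖ ≤ ‖χ.LFunction b‖ := hmax hσK
  rw [heq]
  exact ⟨Real.log_le_log hεpos h1, Real.log_le_log (hεpos.trans_le h1) h2⟩

lemma exists_large (C : ℝ) :
    ∃ σ ∈ Set.Ioc (1:ℝ) 2,
      C < Real.log (‖L ↗(1 : DirichletCharacter ℂ N) (sC σ 0)‖) := by
  classical
  have hN : 1 ≤ N := Nat.one_le_iff_ne_zero.mpr (NeZero.ne N)
  -- choose n with partial sum of 1/(k*N+1) large
  have hdiv : Filter.Tendsto (fun n : ℕ => ∑ k ∈ Finset.range n, ((k*N+1:ℕ):ℝ)⁻¹)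
      Filter.atTop Filter.atTop := by
    have hge : ∀ n : ℕ, (N:ℝ)⁻¹ * (∑ k ∈ Finset.range n, 1/((k:ℝ)+1))
        ≤ ∑ k ∈ Finset.range n, ((k*N+1:ℕ):ℝ)⁻¹ := by
      intro n
      rw [Finset.mul_sum]
      apply Finset.sum_le_sum
      intro k _
      rw [one_div, ← mul_inv]
      apply inv_anti₀
      · push_cast; positivity
      · push_cast
        have : (1:ℝ) ≤ N := by exact_mod_cast hN
        nlinarith [Nat.cast_nonneg (α := ℝ) k]
    have hNpos : (0:ℝ) < (N:ℝ)⁻¹ := by positivity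
    refine Filter.tendsto_atTop_mono hge ?_
    exact (Real.tendsto_sum_range_one_div_nat_succ_atTop).const_mul_atTop hNpos
  obtain ⟨n, hn⟩ := (hdiv.eventually_gt_atTop (Real.exp C + 1)).exists
  -- continuity in σ at 1
  set G : ℝ → ℝ := fun σ => ∑ k ∈ Finset.range n, ((k*N+1:ℕ):ℝ) ^ (-σ) with hG_def
  have hGcont : ContinuousAt G 1 := by
    have hGc : Continuous G := by
      apply continuous_finset_sum
      intro k _
      have hpos : (0:ℝ) < ((k*N+1:ℕ):ℝ) := by positivity
      have heq : (fun σ:ℝ => ((k*N+1:ℕ):ℝ) ^ (-σ))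
          = fun σ => Real.exp (Real.log ((k*N+1:ℕ):ℝ) * (-σ)) := by
        funext σ; rw [Real.rpow_def_of_pos hpos]
      show Continuous (fun σ:ℝ => ((k*N+1:ℕ):ℝ) ^ (-σ))
      rw [heq]
      exact Real.continuous_exp.comp (continuous_const.mul continuous_neg)
    exact hGc.continuousAt
  have hG1 : Real.exp C + 1 ≤ G 1 := by
    rw [hG_def]
    refine le_of_lt (lt_of_lt_of_le hn (le_of_eq (Finset.sum_congr rfl fun k _ => ?_)))
    rw [Real.rpow_neg_one]
  -- find σ ∈ Ioc 1 2 with G σ > exp C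
  have hev : ∀ᶠ σ in nhdsWithin (1:ℝ) (Set.Ioi 1), Real.exp C < G σ ∧ σ ∈ Set.Ioc (1:ℝ) 2 := by
    have h1 : ∀ᶠ σ in nhdsWithin (1:ℝ) (Set.Ioi 1), Real.exp C < G σ := by
      have : Filter.Tendsto G (nhdsWithin (1:ℝ) (Set.Ioi 1)) (nhds (G 1)) :=
        (hGcont.continuousWithinAt).tendsto
      exact this.eventually (eventually_gt_nhds
        (by linarith [Real.exp_pos C, hG1] : Real.exp C < G 1))
    have h2 : ∀ᶠ σ in nhdsWithin (1:ℝ) (Set.Ioi 1), σ ∈ Set.Ioc (1:ℝ) 2 := by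
      have hmem : Set.Ioc (1:ℝ) 2 ∈ nhdsWithin (1:ℝ) (Set.Ioi 1) :=
        Ioc_mem_nhdsGT_of_mem (by norm_num : (1:ℝ) ∈ Set.Ico (1:ℝ) 2)
      exact hmem
    exact h1.and h2
  obtain ⟨σ, hσG, hσI⟩ := hev.exists
  refine ⟨σ, hσI, ?_⟩
  -- now lower bound the L-series
  set s : ℂ := sC σ 0 with hs_def
  have hsre : 1 < s.re := by simpa [hs_def] using hσI.1
  have hsummable : LSeriesSummable (↗(1 : DirichletCharacter ℂ N)) s :=
    DirichletCharacter.LSeriesSummable_of_one_lt_re _ hsre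
  have hterm_re_nonneg : ∀ m : ℕ, 0 ≤ (LSeries.term (↗(1 : DirichletCharacter ℂ N)) s m).re := by
    intro m
    rcases Nat.eq_zero_or_pos m with rfl | hm
    · simp [LSeries.term]
    · rw [LSeries.term_of_ne_zero hm.ne']
      have hpow : (m:ℂ) ^ s = (((m:ℝ) ^ σ : ℝ) : ℂ) := by
        rw [show s = ((σ:ℝ):ℂ) by simp [hs_def, sC],
          show ((m:ℕ):ℂ) = (((m:ℕ):ℝ):ℂ) by norm_cast,
          ← Complex.ofReal_cpow (Nat.cast_nonneg m)]
      rw [hpow]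
      by_cases hu : IsUnit ((m : ZMod N))
      · rw [MulChar.one_apply hu]
        rw [show ((1:ℂ) / (((m:ℝ)^σ :ℝ):ℂ)) = (((((m:ℝ)^σ)⁻¹ : ℝ)):ℂ) by push_cast; ring]
        rw [Complex.ofReal_re]
        positivity
      · rw [MulChar.map_nonunit _ hu]
        simp
  have hterm_ap : ∀ k : ℕ, ((k*N+1:ℕ):ℝ) ^ (-σ)
      ≤ (LSeries.term (↗(1 : DirichletCharacter ℂ N)) s (k*N+1)).re := by
    intro k
    have hm : (k*N+1:ℕ) ≠ 0 := Nat.succ_ne_zero _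
    rw [LSeries.term_of_ne_zero hm]
    have hcast : (((k*N+1:ℕ) : ZMod N)) = 1 := by
      push_cast
      simp [ZMod.natCast_self]
    rw [hcast, map_one]
    have hpow : ((k*N+1:ℕ):ℂ) ^ s = ((((k*N+1:ℕ):ℝ) ^ σ : ℝ) : ℂ) := by
      rw [show s = ((σ:ℝ):ℂ) by simp [hs_def, sC],
        show ((k*N+1:ℕ):ℂ) = (((k*N+1:ℕ):ℝ):ℂ) by norm_cast,
        ← Complex.ofReal_cpow (Nat.cast_nonneg _)]
    rw [hpow, show ((1:ℂ) / ((((k*N+1:ℕ):ℝ)^σ :ℝ):ℂ)) = ((((((k*N+1:ℕ):ℝ)^σ)⁻¹ : ℝ)):ℂ) by push_cast; ring,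
      Complex.ofReal_re, ← Real.rpow_neg (Nat.cast_nonneg _)]
  have hsum_re : Summable (fun m : ℕ => (LSeries.term (↗(1 : DirichletCharacter ℂ N)) s m).re) :=
    (Complex.hasSum_re hsummable.hasSum).summable
  have hfin : G σ ≤ ∑' m : ℕ, (LSeries.term (↗(1 : DirichletCharacter ℂ N)) s m).re := by
    have hinj : Function.Injective (fun k : ℕ => k*N+1) := by
      intro a b hab
      simp only [add_left_inj] at hab
      exact Nat.eq_of_mul_eq_mul_right (Nat.pos_of_ne_zero (NeZero.ne N)) hab
    calc G σ ≤ ∑ k ∈ Finset.range n, (LSeries.term (↗(1 : DirichletCharacter ℂ N)) s (k*N+1)).re :=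
          Finset.sum_le_sum (fun k _ => hterm_ap k)
      _ = ∑ m ∈ (Finset.range n).image (fun k => k*N+1),
            (LSeries.term (↗(1 : DirichletCharacter ℂ N)) s m).re := by
          rw [Finset.sum_image (fun a _ b _ h => hinj h)]
      _ ≤ ∑' m : ℕ, (LSeries.term (↗(1 : DirichletCharacter ℂ N)) s m).re :=
          Summable.sum_le_tsum _ (fun m _ => hterm_re_nonneg m) hsum_re
  have hre_eq : (L (↗(1 : DirichletCharacter ℂ N)) s).re
      = ∑' m : ℕ, (LSeries.term (↗(1 : DirichletCharacter ℂ N)) s m).re :=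
    Complex.re_tsum hsummable
  have habs : Real.exp C < ‖L (↗(1 : DirichletCharacter ℂ N)) s‖ := by
    calc Real.exp C < G σ := hσG
      _ ≤ (L (↗(1 : DirichletCharacter ℂ N)) s).re := by rw [hre_eq]; exact hfin
      _ ≤ ‖L (↗(1 : DirichletCharacter ℂ N)) s‖ := Complex.re_le_norm _
  rw [Real.lt_log_iff_exp_lt (lt_trans (Real.exp_pos C) habs)]
  exact habs

end bounds

section core
variable (N : ℕ) [NeZero N]

/-- `T N τ σ = ∑_{p ≡ 1 mod N} p^{-σ} cos(τ log p)`. -/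
def TT (τ σ : ℝ) : ℝ :=
  ∑' p : Nat.Primes, ind N p * (((p:ℕ):ℝ) ^ (-σ) * Real.cos (τ * Real.log ((p:ℕ):ℝ)))

/-- real part of the prime sum of the twisted L-series. -/
def RePS (χ : DirichletCharacter ℂ N) (τ σ : ℝ) : ℝ :=
  (∑' p : Nat.Primes, χ (p:ℕ) * ((p:ℕ):ℂ) ^ (-(sC σ τ))).re

/-- log of the absolute value of the L-series. -/
def lA (χ : DirichletCharacter ℂ N) (τ σ : ℝ) : ℝ :=
  Real.log (‖L ↗χ (sC σ τ)‖)

lemma RePS_sub_lA (χ : DirichletCharacter ℂ N) (τ : ℝ) {σ : ℝ} (hσ : 1 < σ) :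
    |RePS N χ τ σ - lA N χ τ σ| ≤ cconst :=
  re_tsum_sub_log_le χ hσ

lemma sum_RePS (τ : ℝ) {σ : ℝ} (hσ : 1 < σ) :
    ∑ χ : DirichletCharacter ℂ N, RePS N χ τ σ = (N.totient : ℝ) * TT N τ σ :=
  sum_chars_tsum N τ hσ

theorem core {t : ℝ} (ht : t ≠ 0)
    (hS : Summable (fun p : Nat.Primes =>
      ind N p * ((1 - Real.cos (t * Real.log ((p:ℕ):ℝ))) * ((p:ℕ):ℝ)⁻¹))) : False := by
  classical
  set B : ℝ := ∑' p : Nat.Primes,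
      ind N p * ((1 - Real.cos (t * Real.log ((p:ℕ):ℝ))) * ((p:ℕ):ℝ)⁻¹) with hB_def
  -- Step 1: for every σ ∈ (1,2], `TT N 0 σ - TT N t σ ≤ B`.
  have h1 : ∀ {σ : ℝ}, 1 < σ → TT N 0 σ - TT N t σ ≤ B := by
    intro σ hσ
    have hs0 := summable_ind_real N (τ := 0) hσ
    have hst := summable_ind_real N (τ := t) hσ
    rw [TT, TT, ← hs0.tsum_sub hst]
    refine Summable.tsum_le_tsum (fun p => ?_) (hs0.sub hst) hS
    have hcos1 : Real.cos (t * Real.log ((p:ℕ):ℝ)) ≤ 1 := Real.cos_le_one _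
    have h0 : Real.cos ((0:ℝ) * Real.log ((p:ℕ):ℝ)) = 1 := by simp
    have hfac : ind N p * (((p:ℕ):ℝ) ^ (-σ) * Real.cos ((0:ℝ) * Real.log ((p:ℕ):ℝ)))
        - ind N p * (((p:ℕ):ℝ) ^ (-σ) * Real.cos (t * Real.log ((p:ℕ):ℝ)))
        = ind N p * (((p:ℕ):ℝ) ^ (-σ) * (1 - Real.cos (t * Real.log ((p:ℕ):ℝ)))) := by
      rw [h0]; ring
    rw [hfac]
    apply mul_le_mul_of_nonneg_left ?_ (ind_nonneg N p)
    calc ((p:ℕ):ℝ) ^ (-σ) * (1 - Real.cos (t * Real.log ((p:ℕ):ℝ)))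
        = (1 - Real.cos (t * Real.log ((p:ℕ):ℝ))) * (((p:ℕ):ℝ) ^ (-σ)) := by ring
      _ ≤ (1 - Real.cos (t * Real.log ((p:ℕ):ℝ))) * (((p:ℕ):ℝ))⁻¹ :=
          mul_le_mul_of_nonneg_left (rpow_le_inv p hσ) (by linarith)
  -- Step 2: choose upper bounds for `lA χ t` and lower bounds for `lA χ 0` (χ ≠ 1).
  have hhi : ∀ χ : DirichletCharacter ℂ N, ∃ hi : ℝ, ∀ σ ∈ Set.Ioc (1:ℝ) 2,
      lA N χ t σ ≤ hi := by
    intro χ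
    obtain ⟨lo, hi, h⟩ := exists_log_bounds χ t (Or.inr ht)
    exact ⟨hi, fun σ hσ => (h σ hσ).2⟩
  choose Mt hMt using hhi
  have hlo : ∀ χ : DirichletCharacter ℂ N, ∃ lo : ℝ, χ ≠ 1 → ∀ σ ∈ Set.Ioc (1:ℝ) 2,
      lo ≤ lA N χ 0 σ := by
    intro χ
    by_cases hχ : χ = 1
    · exact ⟨0, fun h => absurd hχ h⟩
    · obtain ⟨lo, hi, h⟩ := exists_log_bounds χ 0 (Or.inl hχ)
      exact ⟨lo, fun _ σ hσ => (h σ hσ).1⟩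
  choose m0 hm0 using hlo
  set K : ℝ := ((Finset.univ : Finset (DirichletCharacter ℂ N)).card : ℝ) with hK_def
  set φ : ℝ := (N.totient : ℝ) with hφ_def
  have hφ0 : 0 ≤ φ := Nat.cast_nonneg _
  set Ctot : ℝ := (∑ χ : DirichletCharacter ℂ N, Mt χ) + φ * B + 2 * K * cconst
      - ∑ χ ∈ (Finset.univ : Finset (DirichletCharacter ℂ N)).erase 1, m0 χ with hC_def
  -- Step 3: the key inequality
  have hkey : ∀ σ ∈ Set.Ioc (1:ℝ) 2, lA N 1 0 σ ≤ Ctot := by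
    intro σ hσI
    have hσ : 1 < σ := hσI.1
    -- ∑_χ lA χ 0 σ ≤ ∑_χ RePS χ 0 σ + K * cconst
    have e1 : ∑ χ : DirichletCharacter ℂ N, lA N χ 0 σ
        ≤ ∑ χ : DirichletCharacter ℂ N, RePS N χ 0 σ + K * cconst := by
      have : ∑ χ : DirichletCharacter ℂ N, lA N χ 0 σ
          ≤ ∑ χ : DirichletCharacter ℂ N, (RePS N χ 0 σ + cconst) :=
        Finset.sum_le_sum fun χ _ => by
          have := abs_le.mp (RePS_sub_lA N χ 0 hσ)
          linarith [this.1]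
      simpa [Finset.sum_add_distrib, hK_def, mul_comm] using this
    -- ∑_χ RePS χ t σ ≤ ∑_χ lA χ t σ + K * cconst
    have e2 : ∑ χ : DirichletCharacter ℂ N, RePS N χ t σ
        ≤ ∑ χ : DirichletCharacter ℂ N, lA N χ t σ + K * cconst := by
      have : ∑ χ : DirichletCharacter ℂ N, RePS N χ t σ
          ≤ ∑ χ : DirichletCharacter ℂ N, (lA N χ t σ + cconst) :=
        Finset.sum_le_sum fun χ _ => by
          have := abs_le.mp (RePS_sub_lA N χ t hσ)
          linarith [this.2]
      simpa [Finset.sum_add_distrib, hK_def, mul_comm] using this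
    have e3 : ∑ χ : DirichletCharacter ℂ N, lA N χ t σ
        ≤ ∑ χ : DirichletCharacter ℂ N, Mt χ :=
      Finset.sum_le_sum fun χ _ => hMt χ σ hσI
    have e4 := sum_RePS N 0 hσ
    have e5 := sum_RePS N t hσ
    have e6 : φ * TT N 0 σ - φ * TT N t σ ≤ φ * B := by
      rw [← mul_sub]
      exact mul_le_mul_of_nonneg_left (h1 hσ) hφ0
    have e7 : lA N 1 0 σ + ∑ χ ∈ (Finset.univ : Finset (DirichletCharacter ℂ N)).erase 1, lA N χ 0 σ
        = ∑ χ : DirichletCharacter ℂ N, lA N χ 0 σ :=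
      Finset.add_sum_erase (Finset.univ) (fun χ : DirichletCharacter ℂ N => lA N χ 0 σ) (Finset.mem_univ 1)
    have e8 : ∑ χ ∈ (Finset.univ : Finset (DirichletCharacter ℂ N)).erase 1, m0 χ
        ≤ ∑ χ ∈ (Finset.univ : Finset (DirichletCharacter ℂ N)).erase 1, lA N χ 0 σ :=
      Finset.sum_le_sum fun χ hχ => hm0 χ (Finset.ne_of_mem_erase hχ) σ hσI
    rw [hC_def]
    linarith [e1, e2, e3, e6, e8, e7, e4, e5]
  obtain ⟨σ, hσI, hbig⟩ := exists_large (N := N) Ctot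
  exact absurd (hkey σ hσI) (not_le.mpr hbig)

end core
end TPaux


theorem toeplitz_pretentious_t_eq_zero
    (f : ℕ → ℂ) (hf : IsMult f) (hb : ∀ n : ℕ, ‖f n‖ ≤ 1)
    (hnz : ∃ n : ℕ, f n ≠ 0) (htoe : IsToeplitz f)
    (m : ℕ) (hm : 1 ≤ m) (χ : ℕ → ℂ) (hχ : IsDirichletCharFn m χ) (t : ℝ)
    (hpret : PretConv f (fun n : ℕ => χ n * (n : ℂ) ^ ((t : ℂ) * Complex.I))) :
    t = 0 := by
  by_contra ht
  obtain ⟨χ₀, hχ₀⟩ := hχ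
  obtain ⟨q, hq1, hq⟩ := htoe 1 le_rfl
  set N := m * q with hN_def
  haveI : NeZero N := ⟨(Nat.mul_pos hm hq1).ne'⟩
  -- the summand of `hpret` is nonnegative
  have habs_g : ∀ p : Nat.Primes,
      ‖f (p:ℕ) * (starRingEnd ℂ)
        (χ (p:ℕ) * ((p:ℕ) : ℂ) ^ ((t : ℂ) * Complex.I))‖ ≤ 1 := by
    intro p
    rw [norm_mul]
    have h1 : ‖f (p:ℕ)‖ ≤ 1 := hb _
    have h2 : ‖(starRingEnd ℂ) (χ (p:ℕ) * ((p:ℕ) : ℂ) ^ ((t : ℂ) * Complex.I))‖ ≤ 1 := by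
      rw [Complex.norm_conj, norm_mul]
      have hc : ‖χ (p:ℕ)‖ ≤ 1 := by
        rw [hχ₀]
        exact χ₀.norm_le_one _
      have hp : ‖((p:ℕ) : ℂ) ^ ((t : ℂ) * Complex.I)‖ = 1 := by
        rw [show ‖((p:ℕ) : ℂ) ^ ((t : ℂ) * Complex.I)‖
            = ‖((p:ℕ) : ℂ) ^ ((t : ℂ) * Complex.I)‖ from rfl]
        rw [norm_natCast_cpow_of_pos p.prop.pos]
        simp
      rw [hp, mul_one]
      exact hc
    calc ‖f (p:ℕ)‖ * ‖(starRingEnd ℂ)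
          (χ (p:ℕ) * ((p:ℕ) : ℂ) ^ ((t : ℂ) * Complex.I))‖
        ≤ 1 * 1 := mul_le_mul h1 h2 (norm_nonneg _) zero_le_one
      _ = 1 := by ring
  have hnonneg : ∀ p : Nat.Primes,
      0 ≤ (1 : ℝ) / ((p : ℕ) : ℝ) *
        (1 - (f (p:ℕ) * (starRingEnd ℂ)
          (χ (p:ℕ) * ((p:ℕ) : ℂ) ^ ((t : ℂ) * Complex.I))).re) := by
    intro p
    apply mul_nonneg (by positivity)
    have := (Complex.re_le_norm (f (p:ℕ) * (starRingEnd ℂ)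
      (χ (p:ℕ) * ((p:ℕ) : ℂ) ^ ((t : ℂ) * Complex.I)))).trans (habs_g p)
    linarith
  -- pointwise comparison with the indicator series
  have hle : ∀ p : Nat.Primes,
      TPaux.ind N p * ((1 - Real.cos (t * Real.log ((p:ℕ):ℝ))) * (((p:ℕ):ℝ))⁻¹)
        ≤ (1 : ℝ) / ((p : ℕ) : ℝ) *
          (1 - (f (p:ℕ) * (starRingEnd ℂ)
            (χ (p:ℕ) * ((p:ℕ) : ℂ) ^ ((t : ℂ) * Complex.I))).re) := by
    intro p
    unfold TPaux.ind
    split_ifs with hp1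
    · -- p ≡ 1 mod N : f p = 1 and χ p = 1
      have hmod : (p : ℕ) ≡ 1 [MOD N] := by
        have : ((p:ℕ) : ZMod N) = ((1 : ℕ) : ZMod N) := by rw [hp1, Nat.cast_one]
        exact (ZMod.natCast_eq_natCast_iff _ _ _).mp this
      have hfp : f (p:ℕ) = 1 := by
        have hmq : (p : ℕ) ≡ 1 [MOD q] := hmod.of_dvd (dvd_mul_left q m)
        have := hq.2 (p:ℕ) p.prop.one_lt.le hmq
        rw [this, hf.1]
      have hχp : χ (p:ℕ) = 1 := by
        have hmm : (p : ℕ) ≡ 1 [MOD m] := hmod.of_dvd (dvd_mul_right m q)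
        have : ((p:ℕ) : ZMod m) = 1 := by
          have := (ZMod.natCast_eq_natCast_iff _ _ _).mpr hmm
          rwa [Nat.cast_one] at this
        rw [hχ₀, this, map_one]
      have hre : (f (p:ℕ) * (starRingEnd ℂ)
          (χ (p:ℕ) * ((p:ℕ) : ℂ) ^ ((t : ℂ) * Complex.I))).re
            = Real.cos (t * Real.log ((p:ℕ):ℝ)) := by
        rw [hfp, hχp, one_mul, one_mul, Complex.conj_re]
        have hexp : ((t : ℂ) * Complex.I) = -(TPaux.sC 0 (-t)) := by
          unfold TPaux.sC
          push_cast
          ring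
        rw [hexp, TPaux.re_cpow p 0 (-t)]
        rw [neg_zero, Real.rpow_zero, one_mul, neg_mul, Real.cos_neg]
      rw [hre, one_mul, one_div]
      apply le_of_eq
      ring
    · refine le_trans (le_of_eq (by ring)) (hnonneg p)
  have hS : Summable (fun p : Nat.Primes =>
      TPaux.ind N p * ((1 - Real.cos (t * Real.log ((p:ℕ):ℝ))) * (((p:ℕ):ℝ))⁻¹)) := by
    refine Summable.of_nonneg_of_le (fun p => ?_) hle hpret
    apply mul_nonneg (TPaux.ind_nonneg N p)
    apply mul_nonneg ?_ (by positivity)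
    linarith [Real.cos_le_one (t * Real.log ((p:ℕ):ℝ))]
  exact TPaux.core N ht hS
end
end
end

section
/- Let f ∈ M take only finitely many values (the range of f is a finite set) and let χ be a Dirichlet character with D(f, χ) < ∞. Then the limit lim_{N→∞} ∑_{p prime, p ≤ N} (1/p)·(1 − f(p)·conj(χ(p))) exists in ℂ if and only if ∑_{p prime, f(p) ≠ χ(p)} 1/p < ∞. -/
open scoped BigOperators Classical

noncomputable section

theorem series_converges_iff_summable_of_finite_range
    (f : ℕ → ℂ) (hf : IsMult f) (hb : ∀ n : ℕ, ‖f n‖ ≤ 1)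
    (hfin : (Set.range f).Finite)
    (m : ℕ) (hm : 1 ≤ m) (χ : ℕ → ℂ) (hχ : IsDirichletCharFn m χ)
    (hpret : PretConv f χ) :
    (∃ L : ℂ, Filter.Tendsto
        (fun N : ℕ => ∑ p ∈ (Finset.Icc 1 N).filter Nat.Prime,
          (1 : ℂ) / p * (1 - f p * (starRingEnd ℂ) (χ p)))
        Filter.atTop (nhds L)) ↔
      Summable (fun p : {p : ℕ // Nat.Prime p ∧ f p ≠ χ p} => (1 : ℝ) / ((p : ℕ) : ℝ)) := by
  classical
  obtain ⟨χ₀, hχ₀⟩ := hχ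
  haveI : NeZero m := ⟨by omega⟩
  set w : ℕ → ℂ := fun n => f n * (starRingEnd ℂ) (χ n) with hwdef
  have hχle : ∀ n : ℕ, ‖χ n‖ ≤ 1 := by
    intro n
    rw [hχ₀]
    exact χ₀.norm_le_one _
  have habsw : ∀ n : ℕ, ‖w n‖ ≤ 1 := by
    intro n
    calc ‖w n‖ = ‖f n‖ * ‖χ n‖ := by
          simp [hwdef, map_mul, Complex.norm_conj]
      _ ≤ 1 * 1 :=
          mul_le_mul (hb n) (hχle n) (norm_nonneg _) zero_le_one
      _ = 1 := one_mul 1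
  have hne1 : ∀ p : ℕ, p.Prime → f p ≠ χ p → w p ≠ 1 := by
    intro p hp hfp hw1
    by_cases hz : χ p = 0
    · rw [hwdef] at hw1
      simp [hz] at hw1
    · have hunit : IsUnit ((p : ZMod m)) := by
        by_contra h
        exact hz (by rw [hχ₀]; exact χ₀.map_nonunit h)
      have hnorm : ‖χ p‖ = 1 := by
        rw [hχ₀, ← hunit.unit_spec]
        exact χ₀.unit_norm_eq_one hunit.unit
      have hc : (starRingEnd ℂ) (χ p) * χ p = 1 := by
        rw [mul_comm, Complex.mul_conj]
        rw [← Complex.sq_norm, hnorm]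
        norm_num
      apply hfp
      calc f p = f p * ((starRingEnd ℂ) (χ p) * χ p) := by rw [hc, mul_one]
        _ = (f p * (starRingEnd ℂ) (χ p)) * χ p := by ring
        _ = 1 * χ p := by
              rw [show f p * (starRingEnd ℂ) (χ p) = w p from rfl, hw1]
        _ = χ p := one_mul _
  -- finiteness of range of w
  have hχfin : (Set.range χ).Finite := by
    have hsub : Set.range χ ⊆ Set.range (fun a : ZMod m => χ₀ a) := by
      rintro x ⟨n, rfl⟩; exact ⟨(n : ZMod m), (hχ₀ n).symm⟩
    exact (Set.finite_range _).subset hsub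
  have hwfin : (Set.range w).Finite := by
    have hsub : Set.range w ⊆
        Set.image2 (fun a b => a * (starRingEnd ℂ) b) (Set.range f) (Set.range χ) := by
      rintro x ⟨n, rfl⟩
      exact ⟨f n, Set.mem_range_self n, χ n, Set.mem_range_self n, rfl⟩
    exact (Set.Finite.image2 _ hfin hχfin).subset hsub
  set T : Finset ℂ := hwfin.toFinset.filter (fun v => v ≠ 1) with hTdef
  have hmemT : ∀ n : ℕ, w n ≠ 1 → w n ∈ T := fun n h =>
    Finset.mem_filter.mpr ⟨hwfin.mem_toFinset.mpr ⟨n, rfl⟩, h⟩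
  -- uniform gap δ
  have hgap : ∃ δ : ℝ, 0 < δ ∧ ∀ n : ℕ, w n ≠ 1 → δ ≤ 1 - (w n).re := by
    by_cases hT : T.Nonempty
    · refine ⟨T.inf' hT (fun v => 1 - v.re), ?_, ?_⟩
      · rw [Finset.lt_inf'_iff]
        intro v hv
        obtain ⟨hvr, hv1⟩ := Finset.mem_filter.mp hv
        obtain ⟨n, rfl⟩ := hwfin.mem_toFinset.mp hvr
        have h2 : ‖w n‖ ≤ 1 := habsw n
        have hsq : (w n).re ^ 2 + (w n).im ^ 2 ≤ 1 := by
          have h3 := Complex.sq_norm (w n)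
          rw [Complex.normSq_apply] at h3
          nlinarith [norm_nonneg (w n)]
        by_contra h
        push_neg at h
        have him : (w n).im = 0 := by nlinarith
        have hre : (w n).re = 1 := by nlinarith
        exact hv1 (Complex.ext (by simpa using hre) (by simpa using him))
      · intro n hn
        exact Finset.inf'_le _ (hmemT n hn)
    · refine ⟨1, one_pos, fun n hn => absurd ⟨w n, hmemT n hn⟩ hT⟩
  obtain ⟨δ, hδpos, hδle⟩ := hgap
  -- RHS holds unconditionally
  have hinj : Function.Injective
      (fun p : {p : ℕ // Nat.Prime p ∧ f p ≠ χ p} => (⟨p.1, p.2.1⟩ : Nat.Primes)) := by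
    intro a b h
    simpa [Subtype.ext_iff] using congrArg Subtype.val h
  have keyR : Summable
      (fun p : {p : ℕ // Nat.Prime p ∧ f p ≠ χ p} => (1 : ℝ) / ((p : ℕ) : ℝ)) := by
    have hs := (hpret.comp_injective hinj).mul_left (1 / δ)
    refine Summable.of_nonneg_of_le (fun p => by positivity) (fun p => ?_) hs
    have hwne := hne1 p.1 p.2.1 p.2.2
    have hle := hδle p.1 hwne
    have hp0 : (0 : ℝ) < ((p : ℕ) : ℝ) := by
      exact_mod_cast p.2.1.pos
    show (1 : ℝ) / ((p : ℕ) : ℝ) ≤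
      1 / δ * ((1 : ℝ) / ((p : ℕ) : ℝ) * (1 - (w p.1).re))
    have hb1 : (1 : ℝ) / ((p : ℕ) : ℝ) * δ ≤ (1 : ℝ) / ((p : ℕ) : ℝ) * (1 - (w p.1).re) :=
      mul_le_mul_of_nonneg_left hle (by positivity)
    have hb2 : 1 / δ * ((1 : ℝ) / ((p : ℕ) : ℝ) * δ) = (1 : ℝ) / ((p : ℕ) : ℝ) := by
      field_simp
    calc (1 : ℝ) / ((p : ℕ) : ℝ) = 1 / δ * ((1 : ℝ) / ((p : ℕ) : ℝ) * δ) := hb2.symm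
      _ ≤ 1 / δ * ((1 : ℝ) / ((p : ℕ) : ℝ) * (1 - (w p.1).re)) :=
          mul_le_mul_of_nonneg_left hb1 (by positivity)
  -- LHS holds unconditionally
  have keyG : Summable (fun p : Nat.Primes => (1 : ℂ) / ((p : ℕ) : ℂ) * (1 - w p)) := by
    refine Summable.of_norm_bounded (g := fun p : Nat.Primes => 2 / δ * ((1 : ℝ) / ((p : ℕ) : ℝ) * (1 - (w p).re)))
      (hpret.mul_left (2 / δ)) (fun p => ?_)
    have hp0 : (0 : ℝ) < ((p : ℕ) : ℝ) := by exact_mod_cast p.2.pos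
    by_cases h1 : w p = 1
    · simp [h1, Complex.one_re]
    · have hle := hδle p h1
      have hn1 : ‖(1 : ℂ) / ((p : ℕ) : ℂ) * (1 - w p)‖ ≤ (1 : ℝ) / ((p : ℕ) : ℝ) * 2 := by
        rw [norm_mul]
        have e1 : ‖(1 : ℂ) / ((p : ℕ) : ℂ)‖ = (1 : ℝ) / ((p : ℕ) : ℝ) := by
          simp
        rw [e1]
        refine mul_le_mul_of_nonneg_left ?_ (by positivity)
        calc ‖(1 : ℂ) - w p‖ ≤ ‖(1 : ℂ)‖ + ‖w p‖ := norm_sub_le _ _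
          _ ≤ 1 + 1 := by
              rw [norm_one]
              have := habsw p
              linarith
          _ = 2 := by norm_num
      refine hn1.trans ?_
      have hb1 : (1 : ℝ) / ((p : ℕ) : ℝ) * δ ≤ (1 : ℝ) / ((p : ℕ) : ℝ) * (1 - (w p).re) :=
        mul_le_mul_of_nonneg_left hle (by positivity)
      have hb2 : 2 / δ * ((1 : ℝ) / ((p : ℕ) : ℝ) * δ) = (1 : ℝ) / ((p : ℕ) : ℝ) * 2 := by
        field_simp
      calc (1 : ℝ) / ((p : ℕ) : ℝ) * 2 = 2 / δ * ((1 : ℝ) / ((p : ℕ) : ℝ) * δ) := hb2.symm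
        _ ≤ 2 / δ * ((1 : ℝ) / ((p : ℕ) : ℝ) * (1 - (w p).re)) :=
            mul_le_mul_of_nonneg_left hb1 (by positivity)
  have keyL : ∃ L : ℂ, Filter.Tendsto
      (fun N : ℕ => ∑ p ∈ (Finset.Icc 1 N).filter Nat.Prime,
        (1 : ℂ) / p * (1 - f p * (starRingEnd ℂ) (χ p)))
      Filter.atTop (nhds L) := by
    set F : ℕ → ℂ := fun n => if n.Prime then (1 : ℂ) / (n : ℂ) * (1 - w n) else 0 with hFdef
    have hFcomp : (fun p : Nat.Primes => (1 : ℂ) / ((p : ℕ) : ℂ) * (1 - w p)) =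
        F ∘ (fun p : Nat.Primes => (p : ℕ)) := by
      funext p
      simp [hFdef, p.2]
    have hinj2 : Function.Injective (fun p : Nat.Primes => (p : ℕ)) :=
      fun a b h => Subtype.ext h
    have hzero : ∀ x ∉ Set.range (fun p : Nat.Primes => (p : ℕ)), F x = 0 := by
      intro x hx
      have : ¬x.Prime := fun h => hx ⟨⟨x, h⟩, rfl⟩
      simp [hFdef, this]
    have hF : Summable F := (hinj2.summable_iff hzero).mp (by rw [← hFcomp]; exact keyG)
    refine ⟨∑' n, F n, ?_⟩
    have ht : Filter.Tendsto (fun N : ℕ => ∑ n ∈ Finset.range (N + 1), F n)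
        Filter.atTop (nhds (∑' n, F n)) :=
      hF.hasSum.tendsto_sum_nat.comp (Filter.tendsto_add_atTop_nat 1)
    refine ht.congr (fun N => ?_)
    have hset : (Finset.range (N + 1)).filter Nat.Prime =
        (Finset.Icc 1 N).filter Nat.Prime := by
      ext a
      simp only [Finset.mem_filter, Finset.mem_range, Finset.mem_Icc]
      constructor
      · rintro ⟨h1, h2⟩; exact ⟨⟨h2.pos, by omega⟩, h2⟩
      · rintro ⟨⟨_, h2⟩, h3⟩; exact ⟨by omega, h3⟩
    calc ∑ n ∈ Finset.range (N + 1), F n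
        = ∑ n ∈ (Finset.range (N + 1)).filter Nat.Prime,
            (1 : ℂ) / (n : ℂ) * (1 - w n) := by
          rw [Finset.sum_filter]
      _ = ∑ p ∈ (Finset.Icc 1 N).filter Nat.Prime,
            (1 : ℂ) / p * (1 - f p * (starRingEnd ℂ) (χ p)) := by
          rw [hset]
  exact ⟨fun _ => keyR, fun _ => keyL⟩
end
end
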